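/- arXiv:2011.09118 — 4 statements merged into one kernel-verified Lean document; each statement's English description precedes it below -/
import Mathlib

section
/- Let n ≥ 4 and g ∈ GL(n,ℝ). Then there exist λ ∈ {0, 1, 2}, h ∈ H' and k ∈ O(n−1,1) such that the matrix m := h g k has last column equal to eₙ = (0, …, 0, 1)ᵀ and last row equal to (−λ, 0, …, 0, 1). -/
open Matrix

noncomputable section

/-- The Lie bracket of `𝔥₃ ⊕ ℝ^{n-3}` on `ℝⁿ`: `[x, y] = (x₁y₂ - x₂y₁) • eₙ`. -/
def bral (n : ℕ) (hn : 4 ≤ n) (x y : Fin n → ℝ) : Fin n → ℝ :=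
  (x ⟨0, by omega⟩ * y ⟨1, by omega⟩ - x ⟨1, by omega⟩ * y ⟨0, by omega⟩) •
    (Pi.single (⟨n - 1, by omega⟩ : Fin n) (1 : ℝ) : Fin n → ℝ)

/-- The matrix `I_{n-1,1} = diag(1, …, 1, -1)`. -/
def Inm (n : ℕ) : Matrix (Fin n) (Fin n) ℝ :=
  Matrix.diagonal fun i => if (i : ℕ) < n - 1 then 1 else -1

/-- `ε_i = 1` for `i ≤ n-1` (1-based), `ε_n = -1`. -/
def eps (n : ℕ) (i : Fin n) : ℝ := if (i : ℕ) < n - 1 then 1 else -1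

/-- The canonical inner product of signature `(n-1,1)`: `⟨x,y⟩₀ = xᵀ I_{n-1,1} y`. -/
def ip0 (n : ℕ) (x y : Fin n → ℝ) : ℝ := ∑ i : Fin n, eps n i * x i * y i

/-- The indefinite orthogonal group `O(n-1,1)`. -/
def Oset (n : ℕ) : Set (Matrix (Fin n) (Fin n) ℝ) := {k | kᵀ * Inm n * k = Inm n}

/-- The group `ℝ^× · Aut(𝔥₃ ⊕ ℝ^{n-3})`: invertible block lower triangular matrices
with diagonal blocks of sizes `(2, n-3, 1)`. -/
def Hset (n : ℕ) : Set (Matrix (Fin n) (Fin n) ℝ) :=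
  {A | IsUnit A.det ∧ ∀ i j : Fin n,
    ((i : ℕ) < 2 ∧ 2 ≤ (j : ℕ)) ∨ ((i : ℕ) < n - 1 ∧ (j : ℕ) = n - 1) → A i j = 0}

/-- `H' = {hᵀ : h ∈ H}`. -/
def Hset' (n : ℕ) : Set (Matrix (Fin n) (Fin n) ℝ) := {A | Aᵀ ∈ Hset n}

/-- `G_λ`: invertible matrices with last column `eₙ` and last row `(-λ, 0, …, 0, 1)`. -/
def Glam (n : ℕ) (hn : 4 ≤ n) (lam : ℝ) : Set (Matrix (Fin n) (Fin n) ℝ) :=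
  {g | IsUnit g.det ∧
    (∀ i : Fin n, g i ⟨n - 1, by omega⟩ = if (i : ℕ) = n - 1 then 1 else 0) ∧
    (∀ j : Fin n, g ⟨n - 1, by omega⟩ j =
      if (j : ℕ) = n - 1 then 1 else if (j : ℕ) = 0 then -lam else 0)}

/-- The matrix `g_{λ,ξ}`: the identity except that the `(1, n-1)` entry is `ξ` and
the `(1, n)` entry is `λ`. -/
def gmat (n : ℕ) (hn : 4 ≤ n) (lam xi : ℝ) : Matrix (Fin n) (Fin n) ℝ :=
  1 + Matrix.single ⟨0, by omega⟩ ⟨n - 2, by omega⟩ xi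
    + Matrix.single ⟨0, by omega⟩ ⟨n - 1, by omega⟩ lam

/-- The inner product `⟨x,y⟩_{λ,ξ} = ⟨g_{λ,ξ}⁻¹x, g_{λ,ξ}⁻¹y⟩₀`. -/
def ipg (n : ℕ) (hn : 4 ≤ n) (lam xi : ℝ) (x y : Fin n → ℝ) : ℝ :=
  ip0 n ((gmat n hn lam xi)⁻¹.mulVec x) ((gmat n hn lam xi)⁻¹.mulVec y)

/-- `x'_i = g_{λ,ξ} e_i`. -/
def xvec (n : ℕ) (hn : 4 ≤ n) (lam xi : ℝ) (i : Fin n) : Fin n → ℝ :=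
  (gmat n hn lam xi).mulVec (Pi.single i 1)

/-- The parameter set `Λ = {(0,0), (1,0), (1,1), (2,0), (2,√3), (2,2)}`. -/
def Lam : Set (ℝ × ℝ) :=
  {(0, 0), (1, 0), (1, 1), (2, 0), (2, Real.sqrt 3), (2, 2)}

namespace Stmt3Aux

variable {n : ℕ}

/- ### basic properties of `ip0` -/

lemma ip0_symm (x y : Fin n → ℝ) : ip0 n x y = ip0 n y x :=
  Finset.sum_congr rfl fun i _ => by ring

lemma ip0_smul_left (c : ℝ) (x y : Fin n → ℝ) : ip0 n (c • x) y = c * ip0 n x y := by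
  unfold ip0
  rw [Finset.mul_sum]
  exact Finset.sum_congr rfl fun i _ => by simp only [Pi.smul_apply, smul_eq_mul]; ring

lemma ip0_smul_right (c : ℝ) (x y : Fin n → ℝ) : ip0 n x (c • y) = c * ip0 n x y := by
  rw [ip0_symm, ip0_smul_left, ip0_symm]

lemma ip0_add_left (x y z : Fin n → ℝ) : ip0 n (x + y) z = ip0 n x z + ip0 n y z := by
  unfold ip0
  rw [← Finset.sum_add_distrib]
  exact Finset.sum_congr rfl fun i _ => by simp only [Pi.add_apply]; ring

lemma ip0_add_right (x y z : Fin n → ℝ) : ip0 n x (y + z) = ip0 n x y + ip0 n x z := by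
  rw [ip0_symm, ip0_add_left, ip0_symm y x, ip0_symm z x]

lemma ip0_sub_left (x y z : Fin n → ℝ) : ip0 n (x - y) z = ip0 n x z - ip0 n y z := by
  unfold ip0
  rw [← Finset.sum_sub_distrib]
  exact Finset.sum_congr rfl fun i _ => by simp only [Pi.sub_apply]; ring

lemma ip0_sub_right (x y z : Fin n → ℝ) : ip0 n x (y - z) = ip0 n x y - ip0 n x z := by
  rw [ip0_symm, ip0_sub_left, ip0_symm y x, ip0_symm z x]

lemma ip0_neg_right (x y : Fin n → ℝ) : ip0 n x (-y) = -ip0 n x y := by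
  have : (-y) = (0 : Fin n → ℝ) - y := by simp
  rw [this, ip0_sub_right]
  have : ip0 n x 0 = 0 := by unfold ip0; simp
  rw [this]; ring

lemma ip0_eq_dot (x y : Fin n → ℝ) : ip0 n x y = x ⬝ᵥ (Inm n).mulVec y := by
  unfold ip0 Inm dotProduct
  exact Finset.sum_congr rfl fun i _ => by
    rw [Matrix.mulVec_diagonal]; unfold eps; ring

lemma ip0_single_left (i : Fin n) (x : Fin n → ℝ) :
    ip0 n (Pi.single i 1) x = eps n i * x i := by
  unfold ip0
  rw [Finset.sum_eq_single i]
  · simp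
  · intro b _ hb; simp [Pi.single_apply, hb]
  · simp

lemma ip0_single_single (i j : Fin n) :
    ip0 n (Pi.single i 1) (Pi.single j 1) = if i = j then eps n i else 0 := by
  rw [ip0_single_left, Pi.single_apply]
  split_ifs with h <;> ring

/- ### the group `O(n-1,1)` -/

lemma oset_ip {k : Matrix (Fin n) (Fin n) ℝ} (hk : k ∈ Oset n) (x y : Fin n → ℝ) :
    ip0 n (k *ᵥ x) (k *ᵥ y) = ip0 n x y := by
  have hk' : kᵀ * (Inm n * k) = Inm n := by rw [← Matrix.mul_assoc]; exact hk
  rw [ip0_eq_dot, ip0_eq_dot, Matrix.mulVec_mulVec]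
  rw [dotProduct_comm, Matrix.dotProduct_mulVec, dotProduct_comm]
  rw [← Matrix.mulVec_transpose, Matrix.mulVec_mulVec, hk']

lemma mem_oset {k : Matrix (Fin n) (Fin n) ℝ}
    (H : ∀ x y, ip0 n (k *ᵥ x) (k *ᵥ y) = ip0 n x y) : k ∈ Oset n := by
  show kᵀ * Inm n * k = Inm n
  ext i j
  have h1 := H (Pi.single i 1) (Pi.single j 1)
  rw [ip0_single_single] at h1
  have lhs : (kᵀ * Inm n * k) i j
      = ip0 n (k *ᵥ Pi.single i 1) (k *ᵥ Pi.single j 1) := by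
    rw [Matrix.mul_apply]
    unfold ip0
    refine Finset.sum_congr rfl fun a _ => ?_
    rw [Matrix.mulVec_single, Matrix.mulVec_single]
    show (kᵀ * Inm n) i a * k a j = eps n a * (k a i * 1) * (k a j * 1)
    unfold Inm
    rw [Matrix.mul_diagonal, Matrix.transpose_apply]
    unfold eps
    ring
  rw [lhs, h1]
  unfold Inm eps
  rw [Matrix.diagonal_apply]

lemma oset_mul {k k' : Matrix (Fin n) (Fin n) ℝ} (h : k ∈ Oset n) (h' : k' ∈ Oset n) :
    k * k' ∈ Oset n := by
  apply mem_oset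
  intro x y
  rw [← Matrix.mulVec_mulVec, ← Matrix.mulVec_mulVec, oset_ip h, oset_ip h']

lemma inm_sq : Inm n * Inm n = (1 : Matrix (Fin n) (Fin n) ℝ) := by
  unfold Inm
  rw [Matrix.diagonal_mul_diagonal]
  ext i j
  by_cases h : (i : ℕ) < n - 1 <;>
    simp [Matrix.diagonal_apply, Matrix.one_apply, h]

lemma oset_left_inv {k : Matrix (Fin n) (Fin n) ℝ} (hk : k ∈ Oset n) :
    (Inm n * kᵀ * Inm n) * k = 1 := by
  have : (Inm n * kᵀ * Inm n) * k = Inm n * (kᵀ * Inm n * k) := by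
    simp only [Matrix.mul_assoc]
  rw [this, hk, inm_sq]

lemma oset_right_inv {k : Matrix (Fin n) (Fin n) ℝ} (hk : k ∈ Oset n) :
    k * (Inm n * kᵀ * Inm n) = 1 :=
  mul_eq_one_comm.1 (oset_left_inv hk)

lemma oset_det {k : Matrix (Fin n) (Fin n) ℝ} (hk : k ∈ Oset n) : IsUnit k.det := by
  refine IsUnit.of_mul_eq_one (Inm n * kᵀ * Inm n).det ?_
  rw [← Matrix.det_mul, oset_right_inv hk, Matrix.det_one]

lemma oset_transpose {k : Matrix (Fin n) (Fin n) ℝ} (hk : k ∈ Oset n) : kᵀ ∈ Oset n := by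
  show kᵀᵀ * Inm n * kᵀ = Inm n
  rw [Matrix.transpose_transpose]
  have h3 := congrArg (fun M => M * Inm n) (oset_right_inv hk)
  simp only [Matrix.mul_assoc, one_mul] at h3
  rw [inm_sq, Matrix.mul_one] at h3
  rw [Matrix.mul_assoc]
  exact h3

/- ### reflections -/

/-- The pseudo-orthogonal reflection in the vector `v`. -/
def rf (n : ℕ) (v : Fin n → ℝ) : Matrix (Fin n) (Fin n) ℝ :=
  Matrix.of fun i j => (if i = j then (1 : ℝ) else 0)
    - (2 / ip0 n v v) * (v i * (eps n j * v j))

lemma rf_mulVec (v x : Fin n → ℝ) :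
    (rf n v) *ᵥ x = x - ((2 * ip0 n v x) / ip0 n v v) • v := by
  funext i
  simp only [rf, Matrix.mulVec, dotProduct, Matrix.of_apply, Pi.sub_apply,
    Pi.smul_apply, smul_eq_mul, sub_mul]
  rw [Finset.sum_sub_distrib]
  congr 1
  · rw [Finset.sum_eq_single i]
    · simp
    · intro b _ hb; simp [Ne.symm hb]
    · simp
  · rw [show (∑ j, 2 / ip0 n v v * (v i * (eps n j * v j)) * x j)
        = (∑ j, eps n j * v j * x j) * (2 / ip0 n v v * v i) from by
      rw [Finset.sum_mul]; exact Finset.sum_congr rfl fun j _ => by ring]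
    unfold ip0
    ring

lemma rf_mem (v : Fin n → ℝ) (hv : ip0 n v v ≠ 0) : rf n v ∈ Oset n := by
  apply mem_oset
  intro x y
  rw [rf_mulVec, rf_mulVec]
  simp only [ip0_sub_left, ip0_sub_right, ip0_smul_left, ip0_smul_right]
  rw [ip0_symm x v]
  field_simp
  ring

/- ### the Cartan-type mapping lemmas -/

lemma cartan (u b : Fin n → ℝ) (hq : ip0 n u u = ip0 n b b) (hb : ip0 n b b ≠ 0) :
    ∃ k ∈ Oset n, k *ᵥ u = b := by
  have e1 : ip0 n (u - b) (u - b) = ip0 n u u - 2 * ip0 n u b + ip0 n b b := by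
    rw [ip0_sub_left, ip0_sub_right, ip0_sub_right, ip0_symm b u]; ring
  by_cases h1 : ip0 n (u - b) (u - b) = 0
  · -- use two reflections
    have e2 : ip0 n (u + b) (u + b) = 4 * ip0 n b b := by
      rw [ip0_add_left, ip0_add_right, ip0_add_right, ip0_symm b u]
      rw [e1] at h1
      linarith
    have h2 : ip0 n (u + b) (u + b) ≠ 0 := by
      rw [e2]; exact mul_ne_zero (by norm_num) hb
    refine ⟨rf n b * rf n (u + b), oset_mul (rf_mem _ hb) (rf_mem _ h2), ?_⟩
    have s1 : 2 * ip0 n (u + b) u / ip0 n (u + b) (u + b) = 1 := by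
      have e3 : ip0 n (u + b) u = ip0 n u u + ip0 n u b := by
        rw [ip0_add_left, ip0_symm b u]
      rw [e3, e2]
      rw [e1] at h1
      have : 2 * (ip0 n u u + ip0 n u b) = 4 * ip0 n b b := by linarith
      rw [this]
      exact div_self (mul_ne_zero (by norm_num) hb)
    have inner : rf n (u + b) *ᵥ u = -b := by
      rw [rf_mulVec, s1, one_smul]; abel
    rw [← Matrix.mulVec_mulVec, inner, rf_mulVec, ip0_neg_right]
    have s2 : 2 * -ip0 n b b / ip0 n b b = -2 := by field_simp
    rw [s2]
    funext j
    simp only [Pi.sub_apply, Pi.neg_apply, Pi.smul_apply, smul_eq_mul]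
    ring
  · refine ⟨rf n (u - b), rf_mem _ h1, ?_⟩
    rw [rf_mulVec]
    have s1 : 2 * ip0 n (u - b) u / ip0 n (u - b) (u - b) = 1 := by
      have e3 : ip0 n (u - b) u = ip0 n u u - ip0 n u b := by
        rw [ip0_sub_left, ip0_symm b u]
      rw [e3, e1]
      have : 2 * (ip0 n u u - ip0 n u b)
          = ip0 n u u - 2 * ip0 n u b + ip0 n b b := by linarith
      rw [this]
      exact div_self (by rw [← e1]; exact h1)
    rw [s1, one_smul, sub_sub_cancel]

lemma null_refl (u w : Fin n → ℝ) (h0 : ip0 n u u = 0) (hw : ip0 n w w = 0)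
    (hs : ip0 n u w ≠ 0) : ∃ k ∈ Oset n, k *ᵥ u = w := by
  have e1 : ip0 n (u - w) (u - w) = -(2 * ip0 n u w) := by
    rw [ip0_sub_left, ip0_sub_right, ip0_sub_right, ip0_symm w u, h0, hw]; ring
  have h1 : ip0 n (u - w) (u - w) ≠ 0 := by
    rw [e1]
    exact neg_ne_zero.2 (mul_ne_zero (by norm_num) hs)
  refine ⟨rf n (u - w), rf_mem _ h1, ?_⟩
  rw [rf_mulVec]
  have s1 : 2 * ip0 n (u - w) u / ip0 n (u - w) (u - w) = 1 := by
    have e3 : ip0 n (u - w) u = -ip0 n u w := by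
      rw [ip0_sub_left, ip0_symm w u, h0]; ring
    rw [e3, e1, show 2 * -ip0 n u w = -(2 * ip0 n u w) from by ring]
    exact div_self (by rw [← e1]; exact h1)
  rw [s1, one_smul, sub_sub_cancel]


/- ### the vectors `w_λ` -/

/-- The vector `(-λ, 0, …, 0, 1)`. -/
def wl (n : ℕ) (lam : ℝ) : Fin n → ℝ := fun j =>
  if (j : ℕ) = n - 1 then 1 else if (j : ℕ) = 0 then -lam else 0

lemma wl_val_last {lam : ℝ} (j : Fin n) (hj : (j : ℕ) = n - 1) : wl n lam j = 1 := by
  unfold wl; rw [if_pos hj]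

lemma wl_val_zero (hn : 4 ≤ n) {lam : ℝ} (j : Fin n) (hj : (j : ℕ) = 0) :
    wl n lam j = -lam := by
  unfold wl; rw [if_neg (by omega), if_pos hj]

lemma eps_val_pos (j : Fin n) (hj : (j : ℕ) < n - 1) : eps n j = 1 := by
  unfold eps; rw [if_pos hj]

lemma eps_val_neg (j : Fin n) (hj : ¬ (j : ℕ) < n - 1) : eps n j = -1 := by
  unfold eps; rw [if_neg hj]

lemma ip0_wl (hn : 4 ≤ n) (u : Fin n → ℝ) (lam : ℝ) (a b : Fin n)
    (ha : (a : ℕ) = 0) (hb : (b : ℕ) = n - 1) :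
    ip0 n u (wl n lam) = -lam * u a - u b := by
  have hab : a ≠ b := fun e => by rw [e] at ha; omega
  unfold ip0
  rw [← Finset.sum_subset (Finset.subset_univ {a, b})
    (fun i _ hi => ?_)]
  · rw [Finset.sum_pair hab, eps_val_pos a (by omega), eps_val_neg b (by omega),
      wl_val_zero hn a ha, wl_val_last b hb]
    ring
  · simp only [Finset.mem_insert, Finset.mem_singleton, not_or] at hi
    obtain ⟨hia, hib⟩ := hi
    have h1 : ¬ (i : ℕ) = n - 1 := fun e => hib (Fin.ext (by omega))
    have h2 : ¬ (i : ℕ) = 0 := fun e => hia (Fin.ext (by omega))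
    unfold wl
    rw [if_neg h1, if_neg h2, mul_zero]

lemma ip0_wl_wl (hn : 4 ≤ n) (lam : ℝ) :
    ip0 n (wl n lam) (wl n lam) = lam ^ 2 - 1 := by
  rw [ip0_wl hn _ lam ⟨0, by omega⟩ ⟨n - 1, by omega⟩ rfl rfl,
    wl_val_zero hn _ rfl, wl_val_last _ rfl]
  ring

lemma null_zero (hn : 4 ≤ n) (u : Fin n → ℝ) (h0 : ip0 n u u = 0) (b : Fin n)
    (hb : (b : ℕ) = n - 1) (hub : u b = 0) : u = 0 := by
  have hsum : ∑ i : Fin n, eps n i * u i * u i = 0 := h0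
  have hnn : ∀ i ∈ (Finset.univ : Finset (Fin n)), 0 ≤ eps n i * u i * u i := by
    intro i _
    by_cases hi : (i : ℕ) = n - 1
    · have : i = b := Fin.ext (by omega)
      rw [this, hub]; simp
    · rw [eps_val_pos i (by have := i.isLt; omega), one_mul]
      exact mul_self_nonneg _
  funext j
  by_cases hj : (j : ℕ) = n - 1
  · have : j = b := Fin.ext (by omega)
    rw [this, hub]; rfl
  · have hterm := (Finset.sum_eq_zero_iff_of_nonneg hnn).1 hsum j (Finset.mem_univ j)
    rw [eps_val_pos j (by have := j.isLt; omega), one_mul] at hterm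
    exact mul_self_eq_zero.1 hterm

lemma null_map (hn : 4 ≤ n) (u : Fin n → ℝ) (hu : u ≠ 0) (h0 : ip0 n u u = 0) :
    ∃ k ∈ Oset n, k *ᵥ u = wl n 1 := by
  have hw1 : ip0 n (wl n 1) (wl n 1) = 0 := by rw [ip0_wl_wl hn]; norm_num
  by_cases hs : ip0 n u (wl n 1) = 0
  · -- orthogonal case: go through `wl (-1)` and reflect in `e₀`
    have hwm : ip0 n (wl n (-1)) (wl n (-1)) = 0 := by rw [ip0_wl_wl hn]; norm_num
    rw [ip0_wl hn u 1 ⟨0, by omega⟩ ⟨n - 1, by omega⟩ rfl rfl] at hs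
    have hs' : ip0 n u (wl n (-1)) ≠ 0 := by
      rw [ip0_wl hn u (-1) ⟨0, by omega⟩ ⟨n - 1, by omega⟩ rfl rfl]
      intro h
      have ha : u ⟨0, by omega⟩ = 0 := by linarith
      have hb : u ⟨n - 1, by omega⟩ = 0 := by linarith
      exact hu (null_zero hn u h0 ⟨n - 1, by omega⟩ rfl hb)
    obtain ⟨k1, hk1, he1⟩ := null_refl u (wl n (-1)) h0 hwm hs'
    set a : Fin n := ⟨0, by omega⟩ with hadef
    set e0 : Fin n → ℝ := Pi.single a 1 with he0
    have q1 : ip0 n e0 e0 = 1 := by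
      rw [he0, ip0_single_single, if_pos rfl, eps_val_pos a (show (0:ℕ) < n - 1 by omega)]
    have q2 : ip0 n e0 (wl n (-1)) = 1 := by
      rw [he0, ip0_single_left, eps_val_pos a (show (0:ℕ) < n - 1 by omega),
        wl_val_zero hn a rfl]
      norm_num
    refine ⟨rf n e0 * k1, oset_mul (rf_mem _ (by rw [q1]; norm_num)) hk1, ?_⟩
    rw [← Matrix.mulVec_mulVec, he1, rf_mulVec, q1, q2]
    funext j
    simp only [Pi.sub_apply, Pi.smul_apply, smul_eq_mul, he0, Pi.single_apply]
    unfold wl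
    by_cases h1 : (j : ℕ) = n - 1
    · rw [if_pos h1, if_pos h1,
        if_neg (show ¬ j = a from fun e => by
          rw [e] at h1; exact (by omega : ¬ (0:ℕ) = n - 1) h1)]
      norm_num
    · by_cases h2 : (j : ℕ) = 0
      · rw [if_neg h1, if_neg h1, if_pos h2, if_pos h2,
          if_pos (show j = a from Fin.ext h2)]
        norm_num
      · rw [if_neg h1, if_neg h1, if_neg h2, if_neg h2,
          if_neg (show ¬ j = a from fun e => h2 (congrArg Fin.val e))]
        norm_num
  · exact null_refl u (wl n 1) h0 hw1 hs

lemma to_wl (hn : 4 ≤ n) (u : Fin n → ℝ) (hu : u ≠ 0) :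
    ∃ lam : ℝ, (lam = 0 ∨ lam = 1 ∨ lam = 2) ∧
      ∃ c : ℝ, c ≠ 0 ∧ ∃ k ∈ Oset n, k *ᵥ u = c • wl n lam := by
  rcases lt_trichotomy (ip0 n u u) 0 with hq | hq | hq
  · set c := Real.sqrt (-ip0 n u u) with hcdef
    have hcpos : 0 < c := Real.sqrt_pos.2 (by linarith)
    have hc2 : c ^ 2 = -ip0 n u u := Real.sq_sqrt (by linarith)
    have hb : ip0 n (c • wl n 0) (c • wl n 0) = ip0 n u u := by
      rw [ip0_smul_left, ip0_smul_right, ip0_wl_wl hn]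
      have : c * (c * ((0:ℝ) ^ 2 - 1)) = -(c ^ 2) := by ring
      rw [this, hc2]; ring
    obtain ⟨k, hk, he⟩ := cartan u (c • wl n 0) hb.symm (by rw [hb]; exact ne_of_lt hq)
    exact ⟨0, Or.inl rfl, c, ne_of_gt hcpos, k, hk, he⟩
  · obtain ⟨k, hk, he⟩ := null_map hn u hu hq
    exact ⟨1, Or.inr (Or.inl rfl), 1, one_ne_zero, k, hk, by rw [he, one_smul]⟩
  · set c := Real.sqrt (ip0 n u u / 3) with hcdef
    have hcpos : 0 < c := Real.sqrt_pos.2 (by linarith)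
    have hc2 : c ^ 2 = ip0 n u u / 3 := Real.sq_sqrt (by linarith)
    have hb : ip0 n (c • wl n 2) (c • wl n 2) = ip0 n u u := by
      rw [ip0_smul_left, ip0_smul_right, ip0_wl_wl hn]
      have : c * (c * ((2:ℝ) ^ 2 - 1)) = c ^ 2 * 3 := by ring
      rw [this, hc2]; ring
    obtain ⟨k, hk, he⟩ := cartan u (c • wl n 2) hb.symm (by rw [hb]; exact ne_of_gt hq)
    exact ⟨2, Or.inr (Or.inr rfl), c, ne_of_gt hcpos, k, hk, he⟩

end Stmt3Aux

open Stmt3Aux in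
/-- every `g ∈ GL(n,ℝ)` can be moved, by `h ∈ H'` on the left and
`k ∈ O(n-1,1)` on the right, into some `G_λ` with `λ ∈ {0,1,2}`, i.e. `hgk` has
last column `eₙ` and last row `(-λ, 0, …, 0, 1)`. -/
theorem stmt3 (n : ℕ) (hn : 4 ≤ n) (g : Matrix (Fin n) (Fin n) ℝ) (hg : IsUnit g.det) :
    ∃ lam : ℝ, (lam = 0 ∨ lam = 1 ∨ lam = 2) ∧
      ∃ h ∈ Hset' n, ∃ k ∈ Oset n, h * g * k ∈ Glam n hn lam := by
  classical
  obtain ⟨l, hlval⟩ : ∃ l : Fin n, (l : ℕ) = n - 1 := ⟨⟨n - 1, by omega⟩, rfl⟩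
  -- the last row of `g` is nonzero
  have hu : g l ≠ 0 := by
    intro h
    have hdz : g.det = 0 :=
      Matrix.det_eq_zero_of_row_eq_zero l (fun j => by simp [h])
    rw [hdz] at hg
    exact not_isUnit_zero hg
  obtain ⟨lam, hlam, c, hc, k', hk', hku⟩ := to_wl hn (g l) hu
  refine ⟨lam, hlam, ?_⟩
  obtain ⟨k, hkdef⟩ : ∃ k : Matrix (Fin n) (Fin n) ℝ, k = k'ᵀ := ⟨_, rfl⟩
  have hkO : k ∈ Oset n := by rw [hkdef]; exact oset_transpose hk'
  obtain ⟨M, hMdef⟩ : ∃ M : Matrix (Fin n) (Fin n) ℝ, M = g * k := ⟨_, rfl⟩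
  have Mrow : ∀ j, M l j = c * wl n lam j := by
    intro j
    have h1 : M l j = ∑ a, k' j a * g l a := by
      rw [hMdef, Matrix.mul_apply]
      exact Finset.sum_congr rfl fun a _ => by
        rw [hkdef, Matrix.transpose_apply]; ring
    rw [h1]
    have h2 := congrFun hku j
    simpa [Matrix.mulVec, dotProduct] using h2
  have Mll : M l l = c := by
    rw [Mrow l, wl_val_last l hlval, mul_one]
  obtain ⟨h, hhdef⟩ : ∃ h : Matrix (Fin n) (Fin n) ℝ, h = Matrix.of fun i j =>
      if i = j then (if j = l then 1/c else 1)
      else if j = l then -(M i l)/c else 0 := ⟨_, rfl⟩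
  -- the generic multiplication formula for `h`
  have hmul : ∀ (X : Matrix (Fin n) (Fin n) ℝ) (i j : Fin n),
      (h * X) i j = if i = l then (1/c) * X l j
        else X i j - (M i l / c) * X l j := by
    intro X i j
    rw [Matrix.mul_apply]
    by_cases hi : i = l
    · rw [if_pos hi, hi]
      have hs : ∑ a, h l a * X a j = h l l * X l j := by
        refine Finset.sum_eq_single l (fun b _ hb => ?_)
          (fun hl => absurd (Finset.mem_univ l) hl)
        simp [hhdef, hb, Ne.symm hb]
      rw [hs]
      have : h l l = 1/c := by simp [hhdef]
      rw [this]
    · rw [if_neg hi]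
      have hsplit : ∀ a, h i a
          = (if a = i then (1:ℝ) else 0) + (if a = l then -(M i l)/c else 0) := by
        intro a
        rw [hhdef]
        simp only [Matrix.of_apply]
        by_cases h1 : i = a
        · have h2 : ¬ a = l := fun e => hi (h1.trans e)
          rw [if_pos h1, if_neg h2, if_pos h1.symm, if_neg h2, add_zero]
        · rw [if_neg h1, if_neg (show ¬ a = i from fun e => h1 e.symm), zero_add]
      calc ∑ a, h i a * X a j
          = ∑ a, ((if a = i then (1:ℝ) else 0) * X a j
            + (if a = l then -(M i l)/c else 0) * X a j) :=
            Finset.sum_congr rfl fun a _ => by rw [hsplit a, add_mul]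
        _ = (∑ a, (if a = i then (1:ℝ) else 0) * X a j)
            + ∑ a, (if a = l then -(M i l)/c else 0) * X a j :=
            Finset.sum_add_distrib
        _ = X i j + (-(M i l)/c) * X l j := by
            congr 1
            · rw [Finset.sum_eq_single i (fun b _ hb => by rw [if_neg hb, zero_mul])
                (fun hl => absurd (Finset.mem_univ i) hl), if_pos rfl, one_mul]
            · rw [Finset.sum_eq_single l (fun b _ hb => by rw [if_neg hb, zero_mul])
                (fun hl => absurd (Finset.mem_univ l) hl), if_pos rfl]
        _ = X i j - (M i l / c) * X l j := by ring
  -- a two-sided inverse for `h`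
  obtain ⟨h2, hh2def⟩ : ∃ h2 : Matrix (Fin n) (Fin n) ℝ, h2 = Matrix.of fun i j =>
      if i = j then (if j = l then c else 1)
      else if j = l then M i l else 0 := ⟨_, rfl⟩
  have hone : h * h2 = 1 := by
    ext i j
    rw [hmul h2 i j, Matrix.one_apply]
    by_cases hj : j = l
    · subst hj
      have hll : h2 j j = c := by simp [hh2def]
      rw [hll]
      by_cases hi : i = j
      · rw [if_pos hi, if_pos hi]
        field_simp
      · rw [if_neg hi, if_neg hi]
        have : h2 i j = M i j := by simp [hh2def, hi]
        rw [this, div_mul_cancel₀ _ hc, sub_self]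
    · have h2lj : h2 l j = 0 := by simp [hh2def, hj, Ne.symm hj]
      rw [h2lj, mul_zero, mul_zero, sub_zero]
      by_cases hij : i = j
      · rw [if_pos hij]
        have hil : ¬ i = l := fun e => hj (hij.symm.trans e)
        rw [if_neg hil]
        simp [hh2def, hij, hj]
      · rw [if_neg hij]
        by_cases hi : i = l
        · rw [if_pos hi]
        · rw [if_neg hi]
          simp [hh2def, hij, hj]
  have hdet_h : IsUnit h.det :=
    IsUnit.of_mul_eq_one h2.det (by rw [← Matrix.det_mul, hone, Matrix.det_one])
  have hH : h ∈ Hset' n := by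
    show hᵀ ∈ Hset n
    refine ⟨by rw [Matrix.det_transpose]; exact hdet_h, ?_⟩
    intro i j hcond
    rw [Matrix.transpose_apply]
    have hji : ¬ j = i := by
      intro e
      have hv : (j : ℕ) = (i : ℕ) := congrArg Fin.val e
      rcases hcond with ⟨c1, c2⟩ | ⟨c1, c2⟩ <;> omega
    have hil : ¬ i = l := by
      intro e
      have hv : (i : ℕ) = (l : ℕ) := congrArg Fin.val e
      rcases hcond with ⟨c1, c2⟩ | ⟨c1, c2⟩ <;> omega
    simp [hhdef, hji, hil]
  -- assemble the three conditions of `Glam`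
  have hdet : IsUnit (h * g * k).det := by
    rw [Matrix.det_mul, Matrix.det_mul]
    exact (hdet_h.mul hg).mul (oset_det hkO)
  have hassoc : h * g * k = h * M := by rw [hMdef, Matrix.mul_assoc]
  have hcol : ∀ (i j0 : Fin n), (j0 : ℕ) = n - 1 →
      (h * g * k) i j0 = if (i : ℕ) = n - 1 then 1 else 0 := by
    intro i j0 hj0
    have hj0l : j0 = l := Fin.ext (by omega)
    rw [hj0l, hassoc, hmul M i l]
    by_cases hi : i = l
    · rw [if_pos hi, Mll, if_pos (show (i : ℕ) = n - 1 by rw [hi]; omega)]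
      field_simp
    · rw [if_neg hi, Mll, div_mul_cancel₀ _ hc, sub_self,
        if_neg (show ¬ (i : ℕ) = n - 1 from fun e => hi (Fin.ext (by omega)))]
  have hrow : ∀ (l0 : Fin n), (l0 : ℕ) = n - 1 → ∀ j, (h * g * k) l0 j =
      if (j : ℕ) = n - 1 then 1 else if (j : ℕ) = 0 then -lam else 0 := by
    intro l0 hl0 j
    have hl0l : l0 = l := Fin.ext (by omega)
    rw [hl0l, hassoc, hmul M l j, if_pos rfl, Mrow j]
    have hcc : 1/c * (c * wl n lam j) = wl n lam j := by field_simp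
    rw [hcc]
    rfl
  exact ⟨h, hH, k, hkO, hdet, fun i => hcol i ⟨n - 1, by omega⟩ rfl,
    fun j => hrow ⟨n - 1, by omega⟩ rfl j⟩
end
end

section
/- Let n ≥ 4 and let g ∈ G₀, i.e. g ∈ GL(n,ℝ) has last column eₙ and last row (0, …, 0, 1). Then there exist h ∈ H' and k ∈ O(n−1,1) such that h g k = Iₙ, the identity matrix. -/
open Matrix

noncomputable section

section AuxCholesky

variable {m : Type*} [Fintype m] [DecidableEq m]

/-- Congruence by an invertible matrix preserves positive definiteness (real case). -/
lemma myPosDef_conj {S W : Matrix m m ℝ} (hS : S.PosDef) (hW : IsUnit W.det) :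
    (W * S * Wᵀ).PosDef := by
  haveI := W.invertibleOfIsUnitDet hW
  have hWT : IsUnit Wᵀ.det := by rwa [Matrix.det_transpose]
  refine Matrix.PosDef.of_dotProduct_mulVec_pos ?_ (fun x hx => ?_)
  · show (W * S * Wᵀ)ᴴ = W * S * Wᵀ
    have hSsymm : Sᵀ = S := by
      have := hS.1
      rwa [Matrix.IsHermitian, Matrix.conjTranspose_eq_transpose_of_trivial] at this
    rw [Matrix.conjTranspose_eq_transpose_of_trivial, Matrix.transpose_mul,
      Matrix.transpose_mul, Matrix.transpose_transpose, hSsymm, Matrix.mul_assoc]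
  · have hy : Wᵀ *ᵥ x ≠ 0 := by
      intro h
      apply hx
      have h2 := congrArg (fun v => (Wᵀ)⁻¹ *ᵥ v) h
      simpa [Matrix.mulVec_mulVec, Matrix.nonsing_inv_mul _ hWT] using h2
    have h2 := hS.dotProduct_mulVec_pos hy
    have heq : star x ⬝ᵥ ((W * S * Wᵀ) *ᵥ x) = star (Wᵀ *ᵥ x) ⬝ᵥ (S *ᵥ (Wᵀ *ᵥ x)) := by
      rw [← Matrix.mulVec_mulVec, ← Matrix.mulVec_mulVec, Matrix.dotProduct_mulVec,
        star_trivial, star_trivial, ← Matrix.mulVec_transpose]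
    rw [heq]
    exact h2

omit [DecidableEq m] in
/-- A submatrix along an equivalence of a positive definite matrix is positive definite. -/
lemma myPosDef_submatrix {l : Type*} [Fintype l] [DecidableEq l] {S : Matrix m m ℝ}
    (hS : S.PosDef) (e : l ≃ m) : (S.submatrix e e).PosDef := by
  refine Matrix.PosDef.of_dotProduct_mulVec_pos (hS.1.submatrix e) (fun x hx => ?_)
  have hy : (x ∘ e.symm) ≠ 0 := by
    intro h
    apply hx
    funext i
    simpa using congrFun h (e i)
  have h2 := hS.dotProduct_mulVec_pos hy
  rw [Matrix.submatrix_mulVec_equiv]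
  have heq : star x ⬝ᵥ ((S *ᵥ (x ∘ e.symm)) ∘ e)
      = star (x ∘ e.symm) ⬝ᵥ (S *ᵥ (x ∘ e.symm)) := by
    simp only [dotProduct, Function.comp, Pi.star_apply]
    exact Fintype.sum_equiv e _ _ (fun i => by simp)
  rw [heq]
  exact h2

/-- `1 : Matrix` does not depend on the choice of `DecidableEq` instance. -/
lemma matrix_one_indep {l : Type*} [Fintype l] (d1 d2 : DecidableEq l) :
    (@OfNat.ofNat (Matrix l l ℝ) 1 (@One.toOfNat1 _ (@Matrix.one l ℝ d1 _ _))) =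
    (@OfNat.ofNat (Matrix l l ℝ) 1 (@One.toOfNat1 _ (@Matrix.one l ℝ d2 _ _))) := by
  have h : d1 = d2 := funext fun a => funext fun b => Subsingleton.elim _ _
  rw [h]

/-- Upper-triangular Cholesky decomposition of a real positive definite matrix. -/
lemma exists_upper_cholesky {m : ℕ} (S : Matrix (Fin m) (Fin m) ℝ) (hS : S.PosDef) :
    ∃ U : Matrix (Fin m) (Fin m) ℝ, IsUnit U.det ∧ (∀ i j : Fin m, j < i → U i j = 0) ∧
      U * Uᵀ = S := by
  haveI instWF : WellFoundedLT (Fin m) := inferInstance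
  haveI instLF : LocallyFiniteOrderBot (Fin m) := inferInstance
  have hS' : (S.submatrix Fin.revPerm Fin.revPerm).PosDef :=
    myPosDef_submatrix hS Fin.revPerm
  have hWtri : (LDL.lowerInv hS').BlockTriangular OrderDual.toDual :=
    fun i j h => LDL.lowerInv_triangular hS' h
  haveI instInv := LDL.invertibleLowerInv hS'
  have hWone : instInv.invOf * LDL.lowerInv hS' = 1 :=
    (instInv.invOf_mul_self).trans (matrix_one_indep _ _)
  have hWdet : IsUnit (LDL.lowerInv hS').det := Matrix.isUnit_det_of_left_inverse hWone
  have hWTdet : IsUnit (LDL.lowerInv hS')ᵀ.det := by rwa [Matrix.det_transpose]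
  have hdiag_eq : LDL.diag hS' = Matrix.diagonal (LDL.diagEntries hS') := by
    unfold LDL.diag
    congr!
  have hdiagpos : ∀ i, 0 < LDL.diagEntries hS' i := by
    have hpd : (LDL.diag hS').PosDef := by
      rw [LDL.diag_eq_lowerInv_conj, Matrix.conjTranspose_eq_transpose_of_trivial]
      exact myPosDef_conj hS' hWdet
    rw [hdiag_eq] at hpd
    exact fun i => (Matrix.posDef_diagonal_iff.mp hpd) i
  set E : Matrix (Fin m) (Fin m) ℝ :=
    Matrix.diagonal (fun i => Real.sqrt (LDL.diagEntries hS' i)) with hE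
  have hEE : E * Eᵀ = LDL.diag hS' := by
    rw [hE, Matrix.diagonal_transpose, Matrix.diagonal_mul_diagonal, hdiag_eq]
    ext i j
    by_cases h : i = j
    · subst h
      rw [Matrix.diagonal_apply_eq, Matrix.diagonal_apply_eq]
      exact Real.mul_self_sqrt (hdiagpos i).le
    · rw [Matrix.diagonal_apply_ne _ h, Matrix.diagonal_apply_ne _ h]
  set L : Matrix (Fin m) (Fin m) ℝ := (LDL.lowerInv hS')⁻¹ * E with hL
  have hLL : L * Lᵀ = S.submatrix Fin.revPerm Fin.revPerm := by
    have hconj := LDL.diag_eq_lowerInv_conj hS'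
    rw [Matrix.conjTranspose_eq_transpose_of_trivial] at hconj
    have hstep : L * Lᵀ = (LDL.lowerInv hS')⁻¹ * LDL.diag hS' * ((LDL.lowerInv hS')ᵀ)⁻¹ := by
      rw [hL, Matrix.transpose_mul, Matrix.transpose_nonsing_inv, ← hEE]
      simp only [Matrix.mul_assoc]
    rw [hstep, hconj, ← Matrix.mul_assoc, ← Matrix.mul_assoc,
      Matrix.nonsing_inv_mul _ hWdet, Matrix.one_mul, Matrix.mul_assoc,
      Matrix.mul_nonsing_inv _ hWTdet, Matrix.mul_one]
  haveI := (LDL.lowerInv hS').invertibleOfIsUnitDet hWdet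
  have hltri : L.BlockTriangular OrderDual.toDual :=
    (Matrix.blockTriangular_inv_of_blockTriangular hWtri).mul
      (Matrix.blockTriangular_diagonal _)
  set U : Matrix (Fin m) (Fin m) ℝ := L.submatrix Fin.revPerm Fin.revPerm with hU
  have hprod : U * Uᵀ = S := by
    rw [hU, Matrix.transpose_submatrix, Matrix.submatrix_mul_equiv, hLL,
      Matrix.submatrix_submatrix]
    have hid : (Fin.revPerm : Fin m → Fin m) ∘ (Fin.revPerm : Fin m → Fin m) = id :=
      funext fun i => Fin.rev_rev i
    rw [hid, Matrix.submatrix_id_id]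
  refine ⟨U, ?_, ?_, hprod⟩
  · have hd : U.det * U.det = S.det := by
      rw [← hprod, Matrix.det_mul, Matrix.det_transpose]
    refine isUnit_iff_ne_zero.mpr (fun h => ?_)
    have := hS.det_pos
    rw [← hd, h, mul_zero] at this
    exact lt_irrefl _ this
  · intro i j hji
    rw [hU, Matrix.submatrix_apply]
    exact hltri (by simpa using Fin.rev_lt_rev.mpr hji)

end AuxCholesky

/-- every `g ∈ G₀` satisfies `h g k = Iₙ` for some `h ∈ H'`, `k ∈ O(n-1,1)`. -/
theorem stmt4 (n : ℕ) (hn : 4 ≤ n) (g : Matrix (Fin n) (Fin n) ℝ)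
    (hg : g ∈ Glam n hn 0) :
    ∃ h ∈ Hset' n, ∃ k ∈ Oset n, h * g * k = 1 := by
  obtain ⟨hdet, hcol, hrow⟩ := hg
  set N : Fin n := ⟨n - 1, by omega⟩ with hN
  have hNval : (N : ℕ) = n - 1 := rfl
  -- cleaned-up row/column conditions
  have hcol' : ∀ i : Fin n, g i N = if i = N then 1 else 0 := by
    intro i
    rw [hcol i]
    by_cases h : (i : ℕ) = n - 1 <;> simp [h, Fin.ext_iff, hNval]
  have hrow' : ∀ j : Fin n, g N j = if j = N then 1 else 0 := by
    intro j
    rw [hrow j]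
    by_cases h : (j : ℕ) = n - 1 <;> simp [h, Fin.ext_iff, hNval]
  -- `g * gᵀ` is positive definite
  have hSpos : (g * gᵀ).PosDef := by
    have := myPosDef_conj Matrix.PosDef.one hdet
    rwa [Matrix.mul_one] at this
  obtain ⟨U, hUdet, hUtri, hUU⟩ := exists_upper_cholesky _ hSpos
  -- every index is ≤ N
  have hleN : ∀ j : Fin n, j ≤ N := by
    intro j
    rw [Fin.le_def, hNval]
    omega
  have hltN : ∀ j : Fin n, j ≠ N → j < N := fun j hj => lt_of_le_of_ne (hleN j) hj
  -- last row of U is zero off the diagonal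
  have hUrow : ∀ j : Fin n, j ≠ N → U N j = 0 := fun j hj => hUtri N j (hltN j hj)
  -- the (N,N) entry of U is nonzero
  have hUNN : U N N ≠ 0 := by
    have hdet' := hUdet
    rw [Matrix.det_of_upperTriangular (fun i j (h : (id j : Fin n) < id i) => hUtri i j h)]
      at hdet'
    have hne := hdet'.ne_zero
    rw [Finset.prod_ne_zero_iff] at hne
    exact hne N (Finset.mem_univ N)
  -- last column of `g * gᵀ`
  have hScol : ∀ i : Fin n, (g * gᵀ) i N = if i = N then 1 else 0 := by
    intro i
    rw [Matrix.mul_apply]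
    have : ∀ l : Fin n, g i l * gᵀ l N = if l = N then g i l else 0 := by
      intro l
      rw [Matrix.transpose_apply, hrow' l]
      split <;> simp
    simp only [this]
    rw [Finset.sum_ite_eq' Finset.univ N (fun l => g i l)]
    simp [hcol' i]
  -- last column of U is zero off the diagonal
  have hUcol : ∀ i : Fin n, i ≠ N → U i N = 0 := by
    intro i hi
    have h1 : (g * gᵀ) i N = U i N * U N N := by
      rw [← hUU, Matrix.mul_apply]
      rw [Finset.sum_eq_single N]
      · rw [Matrix.transpose_apply]
      · intro l _ hl
        rw [Matrix.transpose_apply, hUrow l hl, mul_zero]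
      · intro h
        exact absurd (Finset.mem_univ N) h
    have h2 : (g * gᵀ) i N = 0 := by rw [hScol i, if_neg hi]
    rw [h2] at h1
    rcases mul_eq_zero.mp h1.symm with h | h
    · exact h
    · exact absurd h hUNN
  -- commutation with Inm
  have hcomm : ∀ A : Matrix (Fin n) (Fin n) ℝ, (∀ j, j ≠ N → A N j = 0) →
      (∀ i, i ≠ N → A i N = 0) → A * Inm n = Inm n * A := by
    intro A h1 h2
    ext i j
    rw [Inm, Matrix.mul_diagonal, Matrix.diagonal_mul]
    by_cases hi : i = N <;> by_cases hj : j = N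
    · rw [hi, hj, mul_comm]
    · rw [hi, h1 j hj, zero_mul, mul_zero]
    · rw [hj, h2 i hi, zero_mul, mul_zero]
    · have hi' : (i : ℕ) < n - 1 := by
        have := i.isLt
        have : (i : ℕ) ≠ n - 1 := fun h => hi (Fin.ext h)
        omega
      have hj' : (j : ℕ) < n - 1 := by
        have := j.isLt
        have : (j : ℕ) ≠ n - 1 := fun h => hj (Fin.ext h)
        omega
      rw [if_pos hi', if_pos hj', one_mul, mul_one]
  have hgInm : g * Inm n = Inm n * g := by
    refine hcomm g (fun j hj => ?_) (fun i hi => ?_)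
    · rw [hrow' j, if_neg hj]
    · rw [hcol' i, if_neg hi]
  have hUInm : U * Inm n = Inm n * U := hcomm U hUrow hUcol
  -- basic invertibility facts
  have hgT : IsUnit gᵀ.det := by rwa [Matrix.det_transpose]
  have hUT : IsUnit Uᵀ.det := by rwa [Matrix.det_transpose]
  have hIginv : Inm n * g⁻¹ = g⁻¹ * Inm n := by
    calc Inm n * g⁻¹ = g⁻¹ * g * (Inm n * g⁻¹) := by
          rw [Matrix.nonsing_inv_mul _ hdet, Matrix.one_mul]
      _ = g⁻¹ * (g * Inm n) * g⁻¹ := by simp only [Matrix.mul_assoc]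
      _ = g⁻¹ * (Inm n * g) * g⁻¹ := by rw [hgInm]
      _ = g⁻¹ * Inm n * (g * g⁻¹) := by simp only [Matrix.mul_assoc]
      _ = g⁻¹ * Inm n := by rw [Matrix.mul_nonsing_inv _ hdet, Matrix.mul_one]
  have hkey : (g⁻¹)ᵀ * g⁻¹ = (Uᵀ)⁻¹ * U⁻¹ := by
    have h1 : (g * gᵀ)⁻¹ = (U * Uᵀ)⁻¹ := by rw [hUU]
    rw [Matrix.mul_inv_rev, Matrix.mul_inv_rev] at h1
    rw [Matrix.transpose_nonsing_inv]
    exact h1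
  -- U⁻¹ is upper triangular
  haveI := U.invertibleOfIsUnitDet hUdet
  have hUinvtri : (U⁻¹).BlockTriangular id :=
    Matrix.blockTriangular_inv_of_blockTriangular (fun i j h => hUtri i j h)
  refine ⟨U⁻¹, ⟨?_, ?_⟩, g⁻¹ * U, ?_, ?_⟩
  · -- determinant of (U⁻¹)ᵀ is a unit
    show IsUnit ((U⁻¹)ᵀ).det
    rw [Matrix.det_transpose]
    exact U.isUnit_nonsing_inv_det hUdet
  · -- the triangularity conditions
    intro i j hij
    show (U⁻¹)ᵀ i j = 0
    rw [Matrix.transpose_apply]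
    have hij' : i < j := by
      rw [Fin.lt_def]
      rcases hij with ⟨h1, h2⟩ | ⟨h1, h2⟩ <;> omega
    exact hUinvtri hij'
  · -- k = g⁻¹ * U lies in O(n-1,1)
    show (g⁻¹ * U)ᵀ * Inm n * (g⁻¹ * U) = Inm n
    rw [Matrix.transpose_mul]
    calc Uᵀ * (g⁻¹)ᵀ * Inm n * (g⁻¹ * U)
        = Uᵀ * ((g⁻¹)ᵀ * (Inm n * (g⁻¹ * U))) := by simp only [Matrix.mul_assoc]
      _ = Uᵀ * ((g⁻¹)ᵀ * (g⁻¹ * (U * Inm n))) := by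
          rw [← Matrix.mul_assoc (Inm n) g⁻¹ U, hIginv, Matrix.mul_assoc g⁻¹ (Inm n) U,
            ← hUInm]
      _ = Uᵀ * (((g⁻¹)ᵀ * g⁻¹) * (U * Inm n)) := by simp only [Matrix.mul_assoc]
      _ = Uᵀ * ((Uᵀ)⁻¹ * U⁻¹ * (U * Inm n)) := by rw [hkey]
      _ = Uᵀ * (Uᵀ)⁻¹ * ((U⁻¹ * U) * Inm n) := by simp only [Matrix.mul_assoc]
      _ = Inm n := by
          rw [Matrix.mul_nonsing_inv _ hUT, Matrix.nonsing_inv_mul _ hUdet,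
            Matrix.one_mul, Matrix.one_mul]
  · -- the product is the identity
    rw [Matrix.mul_assoc, ← Matrix.mul_assoc g g⁻¹ U, Matrix.mul_nonsing_inv _ hdet,
      Matrix.one_mul, Matrix.nonsing_inv_mul _ hUdet]
end
end

section
/- Let n ≥ 4 and g ∈ G₁. Then there exist ξ ∈ {0, 1}, h ∈ H' and k ∈ O(n−1,1) such that h g k equals the matrix obtained from the identity matrix Iₙ by setting its (n−1, 1)-entry to ξ and its (n, 1)-entry to −1. -/
open Matrix

noncomputable section

namespace St6
variable {n : ℕ}

lemma Inm_eq (n : ℕ) : Inm n = Matrix.diagonal (eps n) := rfl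

lemma eps_mul_self (i : Fin n) : eps n i * eps n i = 1 := by
  unfold eps; split_ifs <;> norm_num

lemma ip0_comm (x y : Fin n → ℝ) : ip0 n x y = ip0 n y x :=
  Finset.sum_congr rfl fun i _ => by ring

lemma ip0_add_left (x y z : Fin n → ℝ) : ip0 n (x + y) z = ip0 n x z + ip0 n y z := by
  unfold ip0; rw [← Finset.sum_add_distrib]; exact Finset.sum_congr rfl fun i _ => by simp [Pi.add_apply]; ring

lemma ip0_sub_left (x y z : Fin n → ℝ) : ip0 n (x - y) z = ip0 n x z - ip0 n y z := by
  unfold ip0; rw [← Finset.sum_sub_distrib]; exact Finset.sum_congr rfl fun i _ => by simp [Pi.sub_apply]; ring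

lemma ip0_smul_left (a : ℝ) (x z : Fin n → ℝ) : ip0 n (a • x) z = a * ip0 n x z := by
  unfold ip0; rw [Finset.mul_sum]; exact Finset.sum_congr rfl fun i _ => by simp [Pi.smul_apply]; ring

lemma ip0_add_right (x y z : Fin n → ℝ) : ip0 n x (y + z) = ip0 n x y + ip0 n x z := by
  rw [ip0_comm, ip0_add_left, ip0_comm y x, ip0_comm z x]

lemma ip0_sub_right (x y z : Fin n → ℝ) : ip0 n x (y - z) = ip0 n x y - ip0 n x z := by
  rw [ip0_comm, ip0_sub_left, ip0_comm y x, ip0_comm z x]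

lemma ip0_smul_right (a : ℝ) (x z : Fin n → ℝ) : ip0 n x (a • z) = a * ip0 n x z := by
  rw [ip0_comm, ip0_smul_left, ip0_comm z x]

lemma ip0_dot (x y : Fin n → ℝ) : ip0 n x y = (Inm n).mulVec x ⬝ᵥ y :=
  Finset.sum_congr rfl fun i _ => by
    rw [Inm_eq, Matrix.mulVec_diagonal]

lemma dot_ip0 (x y : Fin n → ℝ) : x ⬝ᵥ (Inm n).mulVec y = ip0 n x y := by
  rw [ip0_comm, ip0_dot, dotProduct_comm]

lemma single_dot (i : Fin n) (x : Fin n → ℝ) : (Pi.single i (1:ℝ)) ⬝ᵥ x = x i := by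
  simp [dotProduct, Pi.single_apply]

lemma ip0_single_left (i : Fin n) (x : Fin n → ℝ) :
    ip0 n (Pi.single i (1:ℝ)) x = eps n i * x i := by
  rw [ip0_dot, Inm_eq]
  have : (Matrix.diagonal (eps n)).mulVec (Pi.single i (1:ℝ)) = Pi.single i (eps n i) := by
    ext j
    rw [Matrix.mulVec_diagonal]
    rcases eq_or_ne j i with rfl | h
    · simp
    · simp [Pi.single_eq_of_ne h]
  rw [this]
  simp [dotProduct, Pi.single_apply]

lemma ip0_single_right (i : Fin n) (x : Fin n → ℝ) :
    ip0 n x (Pi.single i (1:ℝ)) = eps n i * x i := by rw [ip0_comm, ip0_single_left]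

/-- key bridge -/
lemma ip0_mulVec (A : Matrix (Fin n) (Fin n) ℝ) (x y : Fin n → ℝ) :
    ip0 n (A.mulVec x) (A.mulVec y) = x ⬝ᵥ (Aᵀ * Inm n * A).mulVec y := by
  rw [← dot_ip0, mul_assoc, ← Matrix.mulVec_mulVec, Matrix.dotProduct_mulVec x,
    Matrix.vecMul_transpose, ← Matrix.mulVec_mulVec]

lemma isometry_of_mem_Oset {A : Matrix (Fin n) (Fin n) ℝ} (hA : A ∈ Oset n) (x y : Fin n → ℝ) :
    ip0 n (A.mulVec x) (A.mulVec y) = ip0 n x y := by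
  rw [ip0_mulVec, hA, dot_ip0]

lemma mem_Oset_of_isometry {A : Matrix (Fin n) (Fin n) ℝ}
    (h : ∀ x y, ip0 n (A.mulVec x) (A.mulVec y) = ip0 n x y) : A ∈ Oset n := by
  have key : ∀ x y, x ⬝ᵥ (Aᵀ * Inm n * A).mulVec y = x ⬝ᵥ (Inm n).mulVec y := by
    intro x y
    rw [← ip0_mulVec, h, dot_ip0]
  ext i j
  have := key (Pi.single i 1) (Pi.single j 1)
  rw [single_dot, single_dot] at this
  rw [Matrix.mulVec_single, Matrix.mulVec_single] at this
  simpa using this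



section
variable (n) (hn : 4 ≤ n)

def i0 : Fin n := ⟨0, by omega⟩
def i1 : Fin n := ⟨1, by omega⟩
def in2 : Fin n := ⟨n-2, by omega⟩
def in1 : Fin n := ⟨n-1, by omega⟩

def e0 : Fin n → ℝ := Pi.single (i0 n hn) 1
def e1 : Fin n → ℝ := Pi.single (i1 n hn) 1
def en2 : Fin n → ℝ := Pi.single (in2 n hn) 1
def en1 : Fin n → ℝ := Pi.single (in1 n hn) 1
def v0 : Fin n → ℝ := e0 n hn + en1 n hn

end

variable (hn : 4 ≤ n)

lemma eps_i0 : eps n (i0 n hn) = 1 := by rw [eps, if_pos]; simp [i0]; omega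
lemma eps_i1 : eps n (i1 n hn) = 1 := by rw [eps, if_pos]; simp [i1]; omega
lemma eps_in2 : eps n (in2 n hn) = 1 := by rw [eps, if_pos]; simp [in2]; omega
lemma eps_in1 : eps n (in1 n hn) = -1 := by rw [eps, if_neg]; simp [in1]

lemma i0_ne_in1 : i0 n hn ≠ in1 n hn := by simp [i0, in1, Fin.ext_iff]; omega
lemma i1_ne_in1 : i1 n hn ≠ in1 n hn := by simp [i1, in1, Fin.ext_iff]; omega
lemma i1_ne_i0 : i1 n hn ≠ i0 n hn := by simp [i1, i0, Fin.ext_iff]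
lemma in2_ne_i0 : in2 n hn ≠ i0 n hn := by simp [in2, i0, Fin.ext_iff]; omega
lemma in2_ne_i1 : in2 n hn ≠ i1 n hn := by simp [in2, i1, Fin.ext_iff]; omega
lemma in2_ne_in1 : in2 n hn ≠ in1 n hn := by simp [in2, in1, Fin.ext_iff]; omega

lemma v0_apply_i0 : v0 n hn (i0 n hn) = 1 := by
  simp [v0, e0, en1, Pi.single_eq_of_ne (i0_ne_in1 hn)]
lemma v0_apply_in1 : v0 n hn (in1 n hn) = 1 := by
  simp [v0, e0, en1, Pi.single_eq_of_ne ((i0_ne_in1 hn).symm)]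

lemma ip0_v0_left (x : Fin n → ℝ) : ip0 n (v0 n hn) x = x (i0 n hn) - x (in1 n hn) := by
  rw [v0, ip0_add_left, e0, en1, ip0_single_left, ip0_single_left, eps_i0 hn, eps_in1 hn]; ring

lemma ip0_v0_v0 : ip0 n (v0 n hn) (v0 n hn) = 0 := by
  rw [ip0_v0_left, v0_apply_i0, v0_apply_in1, sub_self]

/-- if x ∈ W and ip0 x x = 0 then x = x(n-1) • v0 ; also 0 ≤ ip0 x x -/
lemma term_nonneg {y : Fin n → ℝ} (h1 : y (in1 n hn) = 0) :
    ∀ i ∈ Finset.univ, 0 ≤ eps n i * y i * y i := by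
  intro i _
  rcases eq_or_ne i (in1 n hn) with rfl | h
  · rw [h1]; simp
  · have hv : (i : ℕ) ≠ n - 1 := by
      intro hc; exact h (Fin.ext (by rw [hc]; rfl))
    have he : eps n i = 1 := by
      rw [eps, if_pos]; have := i.isLt; omega
    rw [he, one_mul]; exact mul_self_nonneg _

lemma W_nonneg' {y : Fin n → ℝ} (h1 : y (in1 n hn) = 0) : 0 ≤ ip0 n y y :=
  Finset.sum_nonneg (term_nonneg hn h1)

lemma W_null' {y : Fin n → ℝ} (h1 : y (in1 n hn) = 0) (hs : ip0 n y y = 0) : y = 0 := by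
  have hall := (Finset.sum_eq_zero_iff_of_nonneg (term_nonneg hn h1)).1 hs
  funext i
  rcases eq_or_ne i (in1 n hn) with rfl | h
  · exact h1
  · have hv : (i : ℕ) ≠ n - 1 := by
      intro hc; exact h (Fin.ext (by rw [hc]; rfl))
    have he : eps n i = 1 := by
      rw [eps, if_pos]; have := i.isLt; omega
    have := hall i (Finset.mem_univ i)
    rw [he, one_mul] at this
    exact mul_self_eq_zero.1 this

lemma W_split {x : Fin n → ℝ} (hx : x (i0 n hn) = x (in1 n hn)) :
    ip0 n x x = ip0 n (x - x (in1 n hn) • v0 n hn) (x - x (in1 n hn) • v0 n hn) := by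
  have hv0x : ip0 n (v0 n hn) x = 0 := by rw [ip0_v0_left hn, hx, sub_self]
  have hxv0 : ip0 n x (v0 n hn) = 0 := by rw [ip0_comm]; exact hv0x
  have hexp : ip0 n (x - x (in1 n hn) • v0 n hn) (x - x (in1 n hn) • v0 n hn)
      = ip0 n x x - x (in1 n hn) * ip0 n x (v0 n hn) - x (in1 n hn) * ip0 n (v0 n hn) x
        + x (in1 n hn) * (x (in1 n hn) * ip0 n (v0 n hn) (v0 n hn)) := by
    simp only [ip0_sub_left, ip0_sub_right, ip0_smul_left, ip0_smul_right]; ring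
  rw [hexp, hv0x, hxv0, ip0_v0_v0 hn]; ring

lemma W_nonneg {x : Fin n → ℝ} (hx : x (i0 n hn) = x (in1 n hn)) : 0 ≤ ip0 n x x := by
  rw [W_split hn hx]
  apply W_nonneg' hn
  simp [v0_apply_in1 hn]

lemma W_null {x : Fin n → ℝ} (hx : x (i0 n hn) = x (in1 n hn)) (h0 : ip0 n x x = 0) :
    x = x (in1 n hn) • v0 n hn := by
  rw [W_split hn hx] at h0
  have := W_null' hn (y := x - x (in1 n hn) • v0 n hn) (by simp [v0_apply_in1 hn]) h0
  have := sub_eq_zero.1 this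
  exact this



lemma vecMulVec_mulVec' (a b x : Fin n → ℝ) :
    (Matrix.vecMulVec a b).mulVec x = (b ⬝ᵥ x) • a := by
  ext i
  simp only [Matrix.mulVec, Matrix.vecMulVec_apply, dotProduct, Pi.smul_apply,
    smul_eq_mul, Finset.sum_mul]
  exact Finset.sum_congr rfl fun j _ => by ring

def hmat (n : ℕ) (v : Fin n → ℝ) : Matrix (Fin n) (Fin n) ℝ :=
  1 - (2 / ip0 n v v) • Matrix.vecMulVec v ((Inm n).mulVec v)

lemma hmat_mulVec (v x : Fin n → ℝ) :
    (hmat n v).mulVec x = x - (2 / ip0 n v v * ip0 n v x) • v := by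
  rw [hmat, Matrix.sub_mulVec, Matrix.one_mulVec, Matrix.smul_mulVec,
    vecMulVec_mulVec', ← ip0_dot, smul_smul]

lemma hmat_mem_Oset {v : Fin n → ℝ} (hv : ip0 n v v ≠ 0) : hmat n v ∈ Oset n := by
  apply mem_Oset_of_isometry
  intro x y
  rw [hmat_mulVec, hmat_mulVec]
  simp only [ip0_sub_left, ip0_sub_right, ip0_smul_left, ip0_smul_right]
  rw [ip0_comm x v]
  field_simp
  ring

lemma hmat_fix {v z : Fin n → ℝ} (hz : ip0 n v z = 0) : (hmat n v).mulVec z = z := by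
  rw [hmat_mulVec, hz, mul_zero, zero_smul, sub_zero]

lemma reflect_exists {x y : Fin n → ℝ} (hxy : ip0 n x x = ip0 n y y) (hx : ip0 n x x ≠ 0) :
    ∃ ρ ∈ Oset n, ∃ ε : ℝ, (ε = 1 ∨ ε = -1) ∧ ρ.mulVec x = ε • y ∧
      ∀ z, ip0 n x z = 0 → ip0 n y z = 0 → ρ.mulVec z = z := by
  by_cases h : ip0 n (x - y) (x - y) = 0
  · -- x - y null: use x + y, maps x to -y
    have hyx : ip0 n y x = ip0 n x x := by
      have hexp : ip0 n (x - y) (x - y)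
          = ip0 n x x - ip0 n x y - ip0 n y x + ip0 n y y := by
        simp only [ip0_sub_left, ip0_sub_right]; ring
      rw [hexp] at h
      rw [ip0_comm x y] at h
      linarith [hxy]
    have hq : ip0 n (x + y) (x + y) = 4 * ip0 n x x := by
      have hexp : ip0 n (x + y) (x + y)
          = ip0 n x x + ip0 n x y + ip0 n y x + ip0 n y y := by
        simp only [ip0_add_left, ip0_add_right]; ring
      rw [hexp, ip0_comm x y, hyx, ← hxy]; ring
    have hq0 : ip0 n (x + y) (x + y) ≠ 0 := by rw [hq]; intro hc; apply hx; linarith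
    refine ⟨hmat n (x + y), hmat_mem_Oset hq0, -1, Or.inr rfl, ?_, ?_⟩
    · rw [hmat_mulVec]
      have hva : ip0 n (x + y) x = 2 * ip0 n x x := by
        rw [ip0_add_left, hyx]; ring
      rw [hva, hq]
      have hco : 2 / (4 * ip0 n x x) * (2 * ip0 n x x) = 1 := by field_simp; ring
      rw [hco, one_smul, neg_one_smul]
      abel
    · intro z hxz hyz
      apply hmat_fix
      rw [ip0_add_left, hxz, hyz, add_zero]
  · -- use x - y, maps x to y
    refine ⟨hmat n (x - y), hmat_mem_Oset h, 1, Or.inl rfl, ?_, ?_⟩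
    · rw [hmat_mulVec]
      have hva : ip0 n (x - y) x = ip0 n x x - ip0 n y x := by rw [ip0_sub_left]
      have hq : ip0 n (x - y) (x - y)
          = 2 * (ip0 n x x - ip0 n y x) := by
        simp only [ip0_sub_left, ip0_sub_right]
        rw [ip0_comm x y, ← hxy]; ring
      rw [hva, hq]
      have hne : ip0 n x x - ip0 n y x ≠ 0 := by
        intro hc; apply h
        rw [hq, hc]; ring
      have hco : 2 / (2 * (ip0 n x x - ip0 n y x)) * (ip0 n x x - ip0 n y x) = 1 := by
        field_simp
      rw [hco]
      simp only [one_smul]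
      abel
    · intro z hxz hyz
      apply hmat_fix
      rw [ip0_sub_left, hxz, hyz, sub_zero]

def nrmat (n : ℕ) (hn : 4 ≤ n) (c : Fin n → ℝ) : Matrix (Fin n) (Fin n) ℝ :=
  1 + Matrix.vecMulVec (v0 n hn) ((Inm n).mulVec c)
    - Matrix.vecMulVec c ((Inm n).mulVec (v0 n hn))
    - (ip0 n c c / 2) • Matrix.vecMulVec (v0 n hn) ((Inm n).mulVec (v0 n hn))

lemma nrmat_mulVec (c x : Fin n → ℝ) :
    (nrmat n hn c).mulVec x = x + ip0 n c x • v0 n hn - ip0 n (v0 n hn) x • c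
      - (ip0 n c c / 2 * ip0 n (v0 n hn) x) • v0 n hn := by
  rw [nrmat, Matrix.sub_mulVec, Matrix.sub_mulVec, Matrix.add_mulVec, Matrix.one_mulVec,
    Matrix.smul_mulVec, vecMulVec_mulVec', vecMulVec_mulVec', vecMulVec_mulVec',
    ← ip0_dot, ← ip0_dot, smul_smul]

lemma nrmat_mem_Oset {c : Fin n → ℝ} (hc : ip0 n (v0 n hn) c = 0) :
    nrmat n hn c ∈ Oset n := by
  have hc' : ip0 n c (v0 n hn) = 0 := by rw [ip0_comm]; exact hc
  apply mem_Oset_of_isometry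
  intro x y
  rw [nrmat_mulVec hn, nrmat_mulVec hn]
  simp only [ip0_sub_left, ip0_sub_right, ip0_add_left, ip0_add_right, ip0_smul_left,
    ip0_smul_right]
  rw [ip0_comm x (v0 n hn), ip0_comm x c, ip0_v0_v0 hn, hc, hc']
  ring

lemma nrmat_v0 {c : Fin n → ℝ} (hc : ip0 n (v0 n hn) c = 0) :
    (nrmat n hn c).mulVec (v0 n hn) = v0 n hn := by
  have hc' : ip0 n c (v0 n hn) = 0 := by rw [ip0_comm]; exact hc
  rw [nrmat_mulVec hn, hc', ip0_v0_v0 hn]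
  simp

lemma nrmat_W {c x : Fin n → ℝ} (hx : ip0 n (v0 n hn) x = 0) :
    (nrmat n hn c).mulVec x = x + ip0 n c x • v0 n hn := by
  rw [nrmat_mulVec hn, hx]
  simp

lemma Inm_mul_Inm : Inm n * Inm n = 1 := by
  rw [Inm_eq, Matrix.diagonal_mul_diagonal]
  ext i j
  rcases eq_or_ne i j with rfl | hij
  · simp [Matrix.diagonal_apply_eq, eps_mul_self]
  · simp [Matrix.diagonal_apply_ne _ hij, Matrix.one_apply_ne hij]

lemma Inm_transpose : (Inm n)ᵀ = Inm n := Matrix.diagonal_transpose _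

lemma mul_mem_Oset {A B : Matrix (Fin n) (Fin n) ℝ} (hA : A ∈ Oset n) (hB : B ∈ Oset n) :
    A * B ∈ Oset n := by
  show (A * B)ᵀ * Inm n * (A * B) = Inm n
  have e : (A * B)ᵀ * Inm n * (A * B) = Bᵀ * (Aᵀ * Inm n * A) * B := by
    rw [Matrix.transpose_mul]; noncomm_ring
  rw [e, hA]
  exact hB

lemma Oset_inv {k' : Matrix (Fin n) (Fin n) ℝ} (h : k' ∈ Oset n) :
    (Inm n * k'ᵀ * Inm n) * k' = 1 ∧ k' * (Inm n * k'ᵀ * Inm n) = 1 ∧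
      (Inm n * k'ᵀ * Inm n) ∈ Oset n := by
  have h1 : (Inm n * k'ᵀ * Inm n) * k' = 1 := by
    have e : (Inm n * k'ᵀ * Inm n) * k' = Inm n * (k'ᵀ * Inm n * k') := by noncomm_ring
    rw [e, h, Inm_mul_Inm]
  have h2 : k' * (Inm n * k'ᵀ * Inm n) = 1 := by
    rw [← mul_eq_one_comm]; exact h1
  refine ⟨h1, h2, ?_⟩
  have h3 : k' * Inm n * k'ᵀ = Inm n := by
    have e : k' * Inm n * k'ᵀ = k' * (Inm n * k'ᵀ * Inm n) * Inm n := by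
      have e2 : k' * (Inm n * k'ᵀ * Inm n) * Inm n
          = k' * Inm n * k'ᵀ * (Inm n * Inm n) := by noncomm_ring
      rw [e2, Inm_mul_Inm, mul_one]
    rw [e, h2, one_mul]
  show (Inm n * k'ᵀ * Inm n)ᵀ * Inm n * (Inm n * k'ᵀ * Inm n) = Inm n
  rw [Matrix.transpose_mul, Matrix.transpose_mul, Inm_transpose, Matrix.transpose_transpose]
  have e3 : Inm n * (k' * Inm n) * Inm n * (Inm n * k'ᵀ * Inm n)
      = Inm n * (k' * Inm n * (Inm n * Inm n) * k'ᵀ) * Inm n := by noncomm_ring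
  rw [e3, Inm_mul_Inm, mul_one, h3, Inm_mul_Inm, one_mul]


-- value lemmas
lemma e1_i1 : e1 n hn (i1 n hn) = 1 := by simp [e1]
lemma en2_in2 : en2 n hn (in2 n hn) = 1 := by simp [en2]
lemma e1_in2 : e1 n hn (in2 n hn) = 0 := by
  simp [e1, Pi.single_eq_of_ne (in2_ne_i1 hn)]
lemma en2_i1 : en2 n hn (i1 n hn) = 0 := by
  simp [en2, Pi.single_eq_of_ne ((in2_ne_i1 hn).symm)]
lemma e1_i0 : e1 n hn (i0 n hn) = 0 := by
  simp [e1, Pi.single_eq_of_ne (i1_ne_i0 hn).symm]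
lemma e1_in1 : e1 n hn (in1 n hn) = 0 := by
  simp [e1, Pi.single_eq_of_ne (i1_ne_in1 hn).symm]
lemma en2_i0 : en2 n hn (i0 n hn) = 0 := by
  simp [en2, Pi.single_eq_of_ne (in2_ne_i0 hn).symm]
lemma en2_in1 : en2 n hn (in1 n hn) = 0 := by
  simp [en2, Pi.single_eq_of_ne (in2_ne_in1 hn).symm]
lemma v0_i1 : v0 n hn (i1 n hn) = 0 := by
  simp [v0, e0, en1, Pi.single_eq_of_ne (i1_ne_i0 hn), Pi.single_eq_of_ne (i1_ne_in1 hn)]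
lemma v0_in2 : v0 n hn (in2 n hn) = 0 := by
  simp [v0, e0, en1, Pi.single_eq_of_ne (in2_ne_i0 hn), Pi.single_eq_of_ne (in2_ne_in1 hn)]

lemma e1_def : e1 n hn = Pi.single (i1 n hn) 1 := rfl
lemma en2_def : en2 n hn = Pi.single (in2 n hn) 1 := rfl
lemma ip0_e1_e1 : ip0 n (e1 n hn) (e1 n hn) = 1 := by
  rw [e1_def hn, ip0_single_left, eps_i1 hn]; simp
lemma ip0_en2_en2 : ip0 n (en2 n hn) (en2 n hn) = 1 := by
  rw [en2_def hn, ip0_single_left, eps_in2 hn]; simp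
lemma ip0_e1_en2 : ip0 n (e1 n hn) (en2 n hn) = 0 := by
  rw [e1_def hn, ip0_single_left, eps_i1 hn, en2_i1 hn]; ring
lemma ip0_en2_e1 : ip0 n (en2 n hn) (e1 n hn) = 0 := by rw [ip0_comm, ip0_e1_en2 hn]
lemma ip0_v0_e1 : ip0 n (v0 n hn) (e1 n hn) = 0 := by
  rw [ip0_v0_left hn, e1_i0 hn, e1_in1 hn, sub_zero]
lemma ip0_e1_v0 : ip0 n (e1 n hn) (v0 n hn) = 0 := by rw [ip0_comm, ip0_v0_e1 hn]
lemma ip0_v0_en2 : ip0 n (v0 n hn) (en2 n hn) = 0 := by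
  rw [ip0_v0_left hn, en2_i0 hn, en2_in1 hn, sub_zero]
lemma ip0_en2_v0 : ip0 n (en2 n hn) (v0 n hn) = 0 := by rw [ip0_comm, ip0_v0_en2 hn]

/-- degenerate case reflection -/
lemma deg_case (p : Fin n → ℝ) (hW : p (i0 n hn) = p (in1 n hn)) (hp : ip0 n p p ≠ 0) :
    ∃ ρ ∈ Oset n, ρ.mulVec (v0 n hn) = v0 n hn ∧
      ∃ β : ℝ, ρ.mulVec p = p (in1 n hn) • v0 n hn + β • e1 n hn := by
  have ha : 0 < ip0 n p p := lt_of_le_of_ne (W_nonneg hn hW) (Ne.symm hp)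
  set s := Real.sqrt (ip0 n p p) with hs
  have hss : s * s = ip0 n p p := Real.mul_self_sqrt (le_of_lt ha)
  set pb := p - p (in1 n hn) • v0 n hn with hpb
  have hpbpb : ip0 n pb pb = ip0 n p p := (W_split hn hW).symm
  have hv0pb : ip0 n (v0 n hn) pb = 0 := by
    rw [ip0_v0_left hn]
    simp [hpb, v0_apply_i0 hn, v0_apply_in1 hn, hW]
  have hyy : ip0 n (s • e1 n hn) (s • e1 n hn) = ip0 n p p := by
    rw [ip0_smul_left, ip0_smul_right, ip0_e1_e1 hn]
    rw [← hss]; ring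
  obtain ⟨ρ, hρO, ε, hε, hρx, hfix⟩ := reflect_exists (x := pb) (y := s • e1 n hn)
    (by rw [hpbpb, hyy]) (by rw [hpbpb]; exact hp)
  have hρv0 : ρ.mulVec (v0 n hn) = v0 n hn := by
    apply hfix
    · rw [ip0_comm]; exact hv0pb
    · rw [ip0_smul_left, ip0_e1_v0 hn, mul_zero]
  refine ⟨ρ, hρO, hρv0, ε * s, ?_⟩
  have hp' : p = pb + p (in1 n hn) • v0 n hn := by rw [hpb]; abel
  have step1 : ρ.mulVec p = ρ.mulVec pb + p (in1 n hn) • ρ.mulVec (v0 n hn) := by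
    conv_lhs => rw [hp']
    rw [Matrix.mulVec_add, Matrix.mulVec_smul]
  rw [step1, hρx, hρv0, smul_smul]
  abel

/-- THE core construction -/
lemma core (p0 p1 : Fin n → ℝ)
    (hW0 : p0 (i0 n hn) = p0 (in1 n hn)) (hW1 : p1 (i0 n hn) = p1 (in1 n hn))
    (hind : ∀ α β : ℝ, α • p0 + β • p1 = 0 → α = 0 ∧ β = 0) :
    ∃ ξ : ℝ, (ξ = 0 ∨ ξ = 1) ∧ ∃ k' ∈ Oset n,
      k'.mulVec (v0 n hn) = v0 n hn ∧
      (∃ α β : ℝ, k'.mulVec p0 = α • (v0 n hn - ξ • en2 n hn) + β • e1 n hn) ∧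
      (∃ α β : ℝ, k'.mulVec p1 = α • (v0 n hn - ξ • en2 n hn) + β • e1 n hn) := by
  by_cases ha : ip0 n p0 p0 = 0
  · -- p0 is a multiple of v0
    have hp0 : p0 = p0 (in1 n hn) • v0 n hn := W_null hn hW0 ha
    have ha1 : ip0 n p1 p1 ≠ 0 := by
      intro hc
      have hp1 : p1 = p1 (in1 n hn) • v0 n hn := W_null hn hW1 hc
      have hcomb : p1 (in1 n hn) • p0 + (-(p0 (in1 n hn))) • p1 = 0 := by
        rw [hp0, hp1]; simp [smul_smul]; ring_nf
      obtain ⟨h1, h2⟩ := hind _ _ hcomb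
      have hp00 : p0 = 0 := by rw [hp0, neg_eq_zero.1 h2, zero_smul]
      obtain ⟨h3, _⟩ := hind 1 0 (by rw [hp00]; simp)
      exact one_ne_zero h3
    obtain ⟨ρ, hρO, hρv0, β, hρp1⟩ := deg_case hn p1 hW1 ha1
    refine ⟨0, Or.inl rfl, ρ, hρO, hρv0, ?_, ?_⟩
    · refine ⟨p0 (in1 n hn), 0, ?_⟩
      conv_lhs => rw [hp0]
      rw [Matrix.mulVec_smul, hρv0]
      simp
    · refine ⟨p1 (in1 n hn), β, ?_⟩
      rw [hρp1]
      simp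
  · have ha' : 0 < ip0 n p0 p0 := lt_of_le_of_ne (W_nonneg hn hW0) (Ne.symm ha)
    set a := ip0 n p0 p0 with hadef
    set b := ip0 n p0 p1 with hbdef
    set q1 := p1 - (b / a) • p0 with hq1
    have hWq : q1 (i0 n hn) = q1 (in1 n hn) := by
      simp [hq1, hW0, hW1]
    have hp0q1 : ip0 n p0 q1 = 0 := by
      rw [hq1, ip0_sub_right, ip0_smul_right, ← hadef, ← hbdef]
      field_simp; ring
    have hp1eq : p1 = q1 + (b / a) • p0 := by rw [hq1]; abel
    by_cases hc : ip0 n q1 q1 = 0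
    · -- q1 multiple of v0
      have hq1v : q1 = q1 (in1 n hn) • v0 n hn := W_null hn hWq hc
      obtain ⟨ρ, hρO, hρv0, β, hρp0⟩ := deg_case hn p0 hW0 ha
      refine ⟨0, Or.inl rfl, ρ, hρO, hρv0, ?_, ?_⟩
      · exact ⟨p0 (in1 n hn), β, by rw [hρp0]; simp⟩
      · refine ⟨q1 (in1 n hn) + (b / a) * p0 (in1 n hn), (b / a) * β, ?_⟩
        conv_lhs => rw [hp1eq, hq1v]
        rw [Matrix.mulVec_add, Matrix.mulVec_smul, Matrix.mulVec_smul, hρp0, hρv0]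
        simp only [smul_smul, zero_smul, sub_zero, smul_add, add_smul]
        abel
    · -- nondegenerate case
      have hc' : 0 < ip0 n q1 q1 := lt_of_le_of_ne (W_nonneg hn hWq) (Ne.symm hc)
      set t0 := p0 (in1 n hn) with ht0
      set t1 := q1 (in1 n hn) with ht1
      set pb0 := p0 - t0 • v0 n hn with hpb0
      set qb1 := q1 - t1 • v0 n hn with hqb1
      set s := Real.sqrt a with hsdef
      set r := Real.sqrt (ip0 n q1 q1) with hrdef
      have hss : s * s = a := Real.mul_self_sqrt (le_of_lt ha')
      have hrr : r * r = ip0 n q1 q1 := Real.mul_self_sqrt (le_of_lt hc')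
      have hsne : s ≠ 0 := by intro hcon; rw [hcon] at hss; exact ha (by rw [← hss]; ring)
      have hrne : r ≠ 0 := by intro hcon; rw [hcon] at hrr; exact hc (by rw [← hrr]; ring)
      have hv0p0 : ip0 n (v0 n hn) p0 = 0 := by rw [ip0_v0_left hn, hW0, sub_self]
      have hv0q1 : ip0 n (v0 n hn) q1 = 0 := by rw [ip0_v0_left hn, hWq, sub_self]
      have hv0pb0 : ip0 n (v0 n hn) pb0 = 0 := by
        rw [hpb0, ip0_sub_right, hv0p0, ip0_smul_right, ip0_v0_v0 hn]; ring
      have hv0qb1 : ip0 n (v0 n hn) qb1 = 0 := by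
        rw [hqb1, ip0_sub_right, hv0q1, ip0_smul_right, ip0_v0_v0 hn]; ring
      have hpb0pb0 : ip0 n pb0 pb0 = a := (W_split hn hW0).symm
      have hqb1qb1 : ip0 n qb1 qb1 = ip0 n q1 q1 := (W_split hn hWq).symm
      have hpb0qb1 : ip0 n pb0 qb1 = 0 := by
        rw [hpb0, hqb1]
        simp only [ip0_sub_left, ip0_sub_right, ip0_smul_left, ip0_smul_right]
        rw [hp0q1, ip0_v0_v0 hn, hv0q1, ip0_comm p0 (v0 n hn), hv0p0]
        ring
      -- first reflection: qb1 ↦ ε1 • (r • e1)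
      obtain ⟨ρ1, hρ1O, ε1, hε1, hρ1x, hfix1⟩ := reflect_exists (x := qb1)
        (y := r • e1 n hn)
        (by rw [hqb1qb1, ip0_smul_left, ip0_smul_right, ip0_e1_e1 hn, ← hrr]; ring)
        (by rw [hqb1qb1]; exact hc)
      have hρ1v0 : ρ1.mulVec (v0 n hn) = v0 n hn := by
        apply hfix1
        · rw [ip0_comm]; exact hv0qb1
        · rw [ip0_smul_left, ip0_e1_v0 hn, mul_zero]
      set w := ρ1.mulVec pb0 with hwdef
      have hww : ip0 n w w = a := by
        rw [hwdef, isometry_of_mem_Oset hρ1O, hpb0pb0]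
      have hε1ne : ε1 ≠ 0 := by rcases hε1 with rfl | rfl <;> norm_num
      have hwe1 : ip0 n w (e1 n hn) = 0 := by
        have := isometry_of_mem_Oset hρ1O pb0 qb1
        rw [hρ1x, hpb0qb1, ← hwdef] at this
        rw [ip0_smul_right, ip0_smul_right] at this
        have h2 : ip0 n w (e1 n hn) * (ε1 * r) = 0 := by linarith [this]
        rcases mul_eq_zero.1 h2 with h | h
        · exact h
        · exact absurd h (mul_ne_zero hε1ne hrne)
      have hv0w : ip0 n (v0 n hn) w = 0 := by
        have := isometry_of_mem_Oset hρ1O (v0 n hn) pb0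
        rw [hρ1v0, ← hwdef] at this
        rw [this]; exact hv0pb0
      -- second reflection: w ↦ ε2 • (s • en2)
      obtain ⟨ρ2, hρ2O, ε2, hε2, hρ2x, hfix2⟩ := reflect_exists (x := w)
        (y := s • en2 n hn)
        (by rw [hww, ip0_smul_left, ip0_smul_right, ip0_en2_en2 hn, ← hss]; ring)
        (by rw [hww]; exact ha)
      have hρ2v0 : ρ2.mulVec (v0 n hn) = v0 n hn := by
        apply hfix2
        · rw [ip0_comm]; exact hv0w
        · rw [ip0_smul_left, ip0_en2_v0 hn, mul_zero]
      have hρ2e1 : ρ2.mulVec (e1 n hn) = e1 n hn := by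
        apply hfix2
        · exact hwe1
        · rw [ip0_smul_left, ip0_en2_e1 hn, mul_zero]
      have hε2ne : ε2 ≠ 0 := by rcases hε2 with rfl | rfl <;> norm_num
      -- null rotation
      set cv := (-t1 / (ε1 * r)) • e1 n hn + ((-(ε2 * s) - t0) / (ε2 * s)) • en2 n hn with hcv
      have hv0cv : ip0 n (v0 n hn) cv = 0 := by
        rw [hcv, ip0_add_right, ip0_smul_right, ip0_smul_right, ip0_v0_e1 hn,
          ip0_v0_en2 hn]; ring
      have hNO : nrmat n hn cv ∈ Oset n := nrmat_mem_Oset hn hv0cv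
      have hNv0 : (nrmat n hn cv).mulVec (v0 n hn) = v0 n hn := nrmat_v0 hn hv0cv
      have hcve1 : ip0 n cv (e1 n hn) = -t1 / (ε1 * r) := by
        rw [hcv, ip0_add_left, ip0_smul_left, ip0_smul_left, ip0_e1_e1 hn, ip0_en2_e1 hn]
        ring
      have hcven2 : ip0 n cv (en2 n hn) = (-(ε2 * s) - t0) / (ε2 * s) := by
        rw [hcv, ip0_add_left, ip0_smul_left, ip0_smul_left, ip0_e1_en2 hn, ip0_en2_en2 hn]
        ring
      have hcvv0 : ip0 n cv (v0 n hn) = 0 := by rw [ip0_comm]; exact hv0cv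
      -- image of p0
      have hkp0 : (nrmat n hn cv * ρ2 * ρ1).mulVec p0
          = (-(ε2 * s)) • (v0 n hn - en2 n hn) := by
        rw [← Matrix.mulVec_mulVec, ← Matrix.mulVec_mulVec]
        have hp0' : p0 = pb0 + t0 • v0 n hn := by rw [hpb0]; abel
        conv_lhs => rw [hp0']
        rw [Matrix.mulVec_add, Matrix.mulVec_smul, hρ1v0, ← hwdef]
        rw [Matrix.mulVec_add, Matrix.mulVec_smul, hρ2x, hρ2v0]
        have harg : ip0 n (v0 n hn) (ε2 • s • en2 n hn + t0 • v0 n hn) = 0 := by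
          rw [ip0_add_right, ip0_smul_right, ip0_smul_right, ip0_smul_right,
            ip0_v0_en2 hn, ip0_v0_v0 hn]; ring
        rw [nrmat_W hn harg]
        have hipcv : ip0 n cv (ε2 • s • en2 n hn + t0 • v0 n hn) = -(ε2 * s) - t0 := by
          rw [ip0_add_right, ip0_smul_right, ip0_smul_right, ip0_smul_right, hcven2, hcvv0]
          field_simp
          ring
        rw [hipcv]
        have : (-(ε2 * s) - t0) • v0 n hn
            = (-(ε2 * s)) • v0 n hn - t0 • v0 n hn := by module
        rw [this]
        module
      -- image of q1
      have hkq1 : (nrmat n hn cv * ρ2 * ρ1).mulVec q1 = (ε1 * r) • e1 n hn := by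
        rw [← Matrix.mulVec_mulVec, ← Matrix.mulVec_mulVec]
        have hq1' : q1 = qb1 + t1 • v0 n hn := by rw [hqb1]; abel
        conv_lhs => rw [hq1']
        rw [Matrix.mulVec_add, Matrix.mulVec_smul, hρ1x, hρ1v0]
        rw [Matrix.mulVec_add, Matrix.mulVec_smul, Matrix.mulVec_smul, Matrix.mulVec_smul,
          hρ2e1, hρ2v0]
        have harg : ip0 n (v0 n hn) (ε1 • r • e1 n hn + t1 • v0 n hn) = 0 := by
          rw [ip0_add_right, ip0_smul_right, ip0_smul_right, ip0_smul_right,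
            ip0_v0_e1 hn, ip0_v0_v0 hn]; ring
        rw [nrmat_W hn harg]
        have hipcv : ip0 n cv (ε1 • r • e1 n hn + t1 • v0 n hn) = -t1 := by
          rw [ip0_add_right, ip0_smul_right, ip0_smul_right, ip0_smul_right, hcve1, hcvv0]
          field_simp
          ring
        rw [hipcv]
        module
      refine ⟨1, Or.inr rfl, nrmat n hn cv * ρ2 * ρ1,
        mul_mem_Oset (mul_mem_Oset hNO hρ2O) hρ1O, ?_, ?_, ?_⟩
      · rw [← Matrix.mulVec_mulVec, ← Matrix.mulVec_mulVec, hρ1v0, hρ2v0, hNv0]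
      · refine ⟨-(ε2 * s), 0, ?_⟩
        rw [hkp0]
        module
      · refine ⟨(b / a) * (-(ε2 * s)), ε1 * r, ?_⟩
        conv_lhs => rw [hp1eq]
        rw [Matrix.mulVec_add, Matrix.mulVec_smul, hkq1, hkp0]
        module


lemma std_mulVec (i j : Fin n) (c : ℝ) (x : Fin n → ℝ) :
    (Matrix.single i j c).mulVec x = Pi.single i (c * x j) := by
  ext k
  simp only [Matrix.mulVec, dotProduct, Matrix.single]
  rw [Finset.sum_eq_single j]
  · rcases eq_or_ne k i with rfl | h
    · simp
    · simp [Pi.single_eq_of_ne h, Ne.symm h]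
  · intro b _ hb
    simp [Matrix.of_apply, hb, Ne.symm hb]
  · simp

lemma single_c (i : Fin n) (c : ℝ) :
    (Pi.single i c : Fin n → ℝ) = c • (Pi.single i (1:ℝ) : Fin n → ℝ) := by
  ext k
  simp only [Pi.single_apply, Pi.smul_apply, smul_eq_mul]
  split_ifs <;> ring

lemma e0_def : e0 n hn = Pi.single (i0 n hn) 1 := rfl
lemma en1_def : en1 n hn = Pi.single (in1 n hn) 1 := rfl
lemma v0_def : v0 n hn = e0 n hn + en1 n hn := rfl
lemma e0_i0 : e0 n hn (i0 n hn) = 1 := by simp [e0]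
lemma e0_i1 : e0 n hn (i1 n hn) = 0 := by
  simp [e0, Pi.single_eq_of_ne (i1_ne_i0 hn)]
lemma e0_in1 : e0 n hn (in1 n hn) = 0 := by
  simp [e0, Pi.single_eq_of_ne (i0_ne_in1 hn).symm]

end St6

/-- every `g ∈ G₁` can be moved by `H'` and `O(n-1,1)` to the matrix
equal to the identity except that its `(n-1,1)` entry is `ξ ∈ {0,1}` and its
`(n,1)` entry is `-1`. -/
theorem stmt6 (n : ℕ) (hn : 4 ≤ n) (g : Matrix (Fin n) (Fin n) ℝ)
    (hg : g ∈ Glam n hn 1) :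
    ∃ xi : ℝ, (xi = 0 ∨ xi = 1) ∧ ∃ h ∈ Hset' n, ∃ k ∈ Oset n,
      h * g * k = 1 + Matrix.single ⟨n - 2, by omega⟩ ⟨0, by omega⟩ xi
        + Matrix.single ⟨n - 1, by omega⟩ ⟨0, by omega⟩ (-1) := by
  obtain ⟨hdet, hcolg, hrowg⟩ := hg
  have hginv : g * g⁻¹ = 1 := Matrix.mul_nonsing_inv g hdet
  have hinvg : g⁻¹ * g = 1 := Matrix.nonsing_inv_mul g hdet
  have happ : ∀ x : Fin n → ℝ, g.mulVec (g⁻¹.mulVec x) = x := by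
    intro x; rw [Matrix.mulVec_mulVec, hginv, Matrix.one_mulVec]
  have hrow' : ∀ j : Fin n, g (St6.in1 n hn) j
      = (if (j : ℕ) = n - 1 then 1 else if (j : ℕ) = 0 then -(1:ℝ) else 0) := by
    intro j
    exact hrowg j
  have rowsum : ∀ y : Fin n → ℝ,
      (g.mulVec y) (St6.in1 n hn) = y (St6.in1 n hn) - y (St6.i0 n hn) := by
    intro y
    have hterm : ∀ j : Fin n, g (St6.in1 n hn) j * y j
        = (if j = St6.in1 n hn then y j else 0) - (if j = St6.i0 n hn then y j else 0) := by
      intro j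
      rw [hrow' j]
      rcases eq_or_ne j (St6.in1 n hn) with rfl | h1
      · rw [if_pos (show ((St6.in1 n hn : Fin n) : ℕ) = n - 1 from rfl), if_pos rfl,
          if_neg (St6.i0_ne_in1 hn).symm]
        ring
      · have h1' : ¬ ((j : ℕ) = n - 1) := fun hc => h1 (Fin.ext hc)
        rw [if_neg h1', if_neg h1]
        rcases eq_or_ne j (St6.i0 n hn) with rfl | h2
        · rw [if_pos (show ((St6.i0 n hn : Fin n) : ℕ) = 0 from rfl), if_pos rfl]
          ring
        · have h2' : ¬ ((j : ℕ) = 0) := fun hc => h2 (Fin.ext hc)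
          rw [if_neg h2', if_neg h2]
          ring
    calc (g.mulVec y) (St6.in1 n hn) = ∑ j, g (St6.in1 n hn) j * y j := rfl
    _ = ∑ j, ((if j = St6.in1 n hn then y j else 0) - (if j = St6.i0 n hn then y j else 0)) :=
        Finset.sum_congr rfl fun j _ => hterm j
    _ = y (St6.in1 n hn) - y (St6.i0 n hn) := by
        rw [Finset.sum_sub_distrib, Finset.sum_ite_eq', Finset.sum_ite_eq']
        simp
  set p0 := g⁻¹.mulVec (St6.e0 n hn) with hp0def
  set p1 := g⁻¹.mulVec (St6.e1 n hn) with hp1def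
  have hWgen : ∀ x : Fin n → ℝ, x (St6.in1 n hn) = 0 →
      (g⁻¹.mulVec x) (St6.i0 n hn) = (g⁻¹.mulVec x) (St6.in1 n hn) := by
    intro x hx
    have h := rowsum (g⁻¹.mulVec x)
    rw [happ, hx] at h
    linarith
  have hW0 : p0 (St6.i0 n hn) = p0 (St6.in1 n hn) := hWgen _ (St6.e0_in1 hn)
  have hW1 : p1 (St6.i0 n hn) = p1 (St6.in1 n hn) := hWgen _ (St6.e1_in1 hn)
  have hind : ∀ α β : ℝ, α • p0 + β • p1 = 0 → α = 0 ∧ β = 0 := by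
    intro α β hcomb
    have h2 : α • St6.e0 n hn + β • St6.e1 n hn = 0 := by
      have h3 := congrArg (fun z => g.mulVec z) hcomb
      simpa [Matrix.mulVec_add, Matrix.mulVec_smul, hp0def, hp1def, happ,
        Matrix.mulVec_zero] using h3
    constructor
    · have h4 := congrFun h2 (St6.i0 n hn)
      simpa [St6.e0_i0 hn, St6.e1_i0 hn] using h4
    · have h4 := congrFun h2 (St6.i1 n hn)
      simpa [St6.e0_i1 hn, St6.e1_i1 hn] using h4
  obtain ⟨ξ, hξ, k', hk'O, hk'v0, ⟨α0, β0, hk0⟩, ⟨α1, β1, hk1⟩⟩ :=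
    St6.core hn p0 p1 hW0 hW1 hind
  obtain ⟨hkk', hk'k, hkO⟩ := St6.Oset_inv hk'O
  set E := Matrix.single (St6.in2 n hn) (St6.i0 n hn) ξ with hE
  set F := Matrix.single (St6.in1 n hn) (St6.i0 n hn) (-1 : ℝ) with hF
  set T := 1 + E + F with hT
  have hEE : E * E = 0 := Matrix.single_mul_single_of_ne (h := (St6.in2_ne_i0 hn).symm) ..
  have hEF : E * F = 0 := Matrix.single_mul_single_of_ne (h := St6.i0_ne_in1 hn) ..
  have hFE : F * E = 0 := Matrix.single_mul_single_of_ne (h := (St6.in2_ne_i0 hn).symm) ..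
  have hFF : F * F = 0 := Matrix.single_mul_single_of_ne (h := St6.i0_ne_in1 hn) ..
  have hTinv : T * (1 - E - F) = 1 := by
    have expand : (1 + E + F) * (1 - E - F) = 1 - E*E - E*F - F*E - F*F := by noncomm_ring
    rw [hT, expand, hEE, hEF, hFE, hFF]
    simp
  have hTdet : IsUnit T.det := Matrix.isUnit_det_of_right_inverse hTinv
  have hk'det : IsUnit k'.det := Matrix.isUnit_det_of_left_inverse hkk'
  -- T action lemmas
  have hTu : T.mulVec (St6.v0 n hn - ξ • St6.en2 n hn) = St6.e0 n hn := by
    rw [hT, Matrix.add_mulVec, Matrix.add_mulVec, Matrix.one_mulVec, hE, hF,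
      St6.std_mulVec, St6.std_mulVec]
    have hval : (St6.v0 n hn - ξ • St6.en2 n hn) (St6.i0 n hn) = 1 := by
      simp [Pi.sub_apply, Pi.smul_apply, St6.v0_apply_i0 hn, St6.en2_i0 hn]
    rw [hval, mul_one, mul_one, St6.single_c (St6.in2 n hn) ξ,
      St6.single_c (St6.in1 n hn) (-1)]
    rw [show (Pi.single (St6.in2 n hn) (1:ℝ)) = St6.en2 n hn from rfl,
      show (Pi.single (St6.in1 n hn) (1:ℝ)) = St6.en1 n hn from rfl,
      St6.v0_def hn]
    module
  have hTe1 : T.mulVec (St6.e1 n hn) = St6.e1 n hn := by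
    rw [hT, Matrix.add_mulVec, Matrix.add_mulVec, Matrix.one_mulVec, hE, hF,
      St6.std_mulVec, St6.std_mulVec, St6.e1_i0 hn]
    simp
  refine ⟨ξ, hξ, T * k' * g⁻¹, ?_, Inm n * k'ᵀ * Inm n, hkO, ?_⟩
  · show (T * k' * g⁻¹)ᵀ ∈ Hset n
    refine ⟨?_, ?_⟩
    · rw [Matrix.det_transpose, Matrix.det_mul, Matrix.det_mul]
      exact (hTdet.mul hk'det).mul (Matrix.isUnit_nonsing_inv_det g hdet)
    · intro i j hcond
      rw [Matrix.transpose_apply]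
      have hentry : ∀ (i' j' : Fin n), (T * k' * g⁻¹) j' i'
          = (T.mulVec (k'.mulVec (g⁻¹.mulVec (Pi.single i' 1)))) j' := by
        intro i' j'
        rw [Matrix.mulVec_mulVec, Matrix.mulVec_mulVec, Matrix.mulVec_single]
        exact (mul_one _).symm
      rcases hcond with ⟨hi2, hj2⟩ | ⟨hi, hjn⟩
      · -- i < 2, j ≥ 2
        have hji0 : j ≠ St6.i0 n hn := by
          intro hc
          rw [hc] at hj2
          simp only [St6.i0] at hj2
          omega
        have hji1 : j ≠ St6.i1 n hn := by
          intro hc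
          rw [hc] at hj2
          simp only [St6.i1] at hj2
          omega
        have key : ∀ (αc βc : ℝ) (p : Fin n → ℝ),
            k'.mulVec p = αc • (St6.v0 n hn - ξ • St6.en2 n hn) + βc • St6.e1 n hn →
            (T.mulVec (k'.mulVec p)) j = 0 := by
          intro αc βc p hp
          rw [hp, Matrix.mulVec_add, Matrix.mulVec_smul, Matrix.mulVec_smul, hTu, hTe1]
          simp only [Pi.add_apply, Pi.smul_apply, smul_eq_mul]
          rw [show St6.e0 n hn j = 0 from Pi.single_eq_of_ne hji0 _,
            show St6.e1 n hn j = 0 from Pi.single_eq_of_ne hji1 _]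
          ring
        have hi01 : i = St6.i0 n hn ∨ i = St6.i1 n hn := by
          have : (i : ℕ) = 0 ∨ (i : ℕ) = 1 := by omega
          rcases this with h | h
          · exact Or.inl (Fin.ext h)
          · exact Or.inr (Fin.ext h)
        rcases hi01 with rfl | rfl
        · rw [hentry]
          exact key α0 β0 p0 hk0
        · rw [hentry]
          exact key α1 β1 p1 hk1
      · -- j = n-1
        have hj : j = St6.in1 n hn := Fin.ext hjn
        subst hj
        rw [hentry]
        have hTval : ∀ x : Fin n → ℝ,
            (T.mulVec x) (St6.in1 n hn) = x (St6.in1 n hn) - x (St6.i0 n hn) := by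
          intro x
          rw [hT, Matrix.add_mulVec, Matrix.add_mulVec, Matrix.one_mulVec, hE, hF,
            St6.std_mulVec, St6.std_mulVec]
          simp only [Pi.add_apply]
          rw [Pi.single_eq_of_ne (St6.in2_ne_in1 hn).symm _, Pi.single_eq_same]
          ring
        rw [hTval]
        have hiso := St6.isometry_of_mem_Oset hk'O (St6.v0 n hn)
          (g⁻¹.mulVec (Pi.single i 1))
        rw [hk'v0] at hiso
        have hy0 : ip0 n (St6.v0 n hn) (g⁻¹.mulVec (Pi.single i 1)) = 0 := by
          rw [St6.ip0_v0_left hn]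
          have hr := rowsum (g⁻¹.mulVec (Pi.single i 1))
          rw [happ] at hr
          have hne : St6.in1 n hn ≠ i := by
            intro hc
            have hc2 : (i : ℕ) = n - 1 := by rw [← hc]; rfl
            omega
          have hsi : (Pi.single i (1:ℝ) : Fin n → ℝ) (St6.in1 n hn) = 0 := by
            rw [Pi.single_apply, if_neg hne]
          rw [hsi] at hr
          linarith
        rw [hy0] at hiso
        rw [St6.ip0_v0_left hn] at hiso
        linarith
  · have hfinal : (T * k' * g⁻¹) * g * (Inm n * k'ᵀ * Inm n)
        = T * (k' * ((g⁻¹ * g) * (Inm n * k'ᵀ * Inm n))) := by noncomm_ring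
    rw [hfinal, hinvg, one_mul, hk'k, mul_one, hT, hE, hF]
    rfl
end
end

section
/- Let n ≥ 4, λ, ξ ∈ ℝ, and let ∇ be any bilinear map 𝔤 × 𝔤 → 𝔤 satisfying the Koszul formula for ⟨·,·⟩_{λ,ξ}. Writing x_i := x'_i = g_{λ,ξ}e_i, the following hold: ∇_{x₁}x₁ = λx₂; ∇_{x₁}x₂ = −λx₁ − (λξ/2)x_{n−1} + ((λ²+1)/2)xₙ; ∇_{x₁}x_{n−1} = (λξ/2)x₂; ∇_{x₁}xₙ = ((λ²+1)/2)x₂; ∇_{x₂}x₁ = −(λξ/2)x_{n−1} + ((λ²−1)/2)xₙ; ∇_{x₂}x₂ = 0; ∇_{x₂}x_{n−1} = (ξ/2)(λx₁ − xₙ); ∇_{x₂}xₙ = ((λ²−1)/2)x₁ − (ξ/2)x_{n−1}; ∇_{x_{n−1}}x₁ = (λξ/2)x₂; ∇_{x_{n−1}}x₂ = −(ξ/2)(λx₁ − xₙ); ∇_{x_{n−1}}x_{n−1} = 0; ∇_{x_{n−1}}xₙ = (ξ/2)x₂; ∇_{xₙ}x₁ = ((λ²+1)/2)x₂; ∇_{xₙ}x₂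 = −((λ²+1)/2)x₁ − (ξ/2)x_{n−1} + λxₙ; ∇_{xₙ}x_{n−1} = (ξ/2)x₂; ∇_{xₙ}xₙ = λx₂; and ∇_{x_i}x_j = 0 whenever 3 ≤ i ≤ n−2 or 3 ≤ j ≤ n−2. -/
set_option maxHeartbeats 1000000


open Matrix

noncomputable section

section AuxLC

lemma stdBasis_mulVec {n : ℕ} (a b : Fin n) (c : ℝ) (v : Fin n → ℝ) :
    (Matrix.single a b c).mulVec v = Pi.single a (c * v b) := by
  funext i
  simp [Matrix.mulVec, Matrix.single, dotProduct, Pi.single_apply, ite_and, eq_comm]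

lemma gmat_mul_gmat (n : ℕ) (hn : 4 ≤ n) (lam xi lam' xi' : ℝ) :
    gmat n hn lam xi * gmat n hn lam' xi' = gmat n hn (lam + lam') (xi + xi') := by
  have h2 : (⟨n - 2, by omega⟩ : Fin n) ≠ ⟨0, by omega⟩ := by
    simp [Fin.ext_iff]; omega
  have h1 : (⟨n - 1, by omega⟩ : Fin n) ≠ ⟨0, by omega⟩ := by
    simp [Fin.ext_iff]; omega
  have z1 : Matrix.single (⟨0, by omega⟩ : Fin n) (⟨n - 2, by omega⟩ : Fin n) xi *
      Matrix.single (⟨0, by omega⟩ : Fin n) (⟨n - 2, by omega⟩ : Fin n) xi' = 0 :=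
    Matrix.single_mul_single_of_ne _ _ _ _ h2 _
  have z2 : Matrix.single (⟨0, by omega⟩ : Fin n) (⟨n - 2, by omega⟩ : Fin n) xi *
      Matrix.single (⟨0, by omega⟩ : Fin n) (⟨n - 1, by omega⟩ : Fin n) lam' = 0 :=
    Matrix.single_mul_single_of_ne _ _ _ _ h2 _
  have z3 : Matrix.single (⟨0, by omega⟩ : Fin n) (⟨n - 1, by omega⟩ : Fin n) lam *
      Matrix.single (⟨0, by omega⟩ : Fin n) (⟨n - 2, by omega⟩ : Fin n) xi' = 0 :=
    Matrix.single_mul_single_of_ne _ _ _ _ h1 _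
  have z4 : Matrix.single (⟨0, by omega⟩ : Fin n) (⟨n - 1, by omega⟩ : Fin n) lam *
      Matrix.single (⟨0, by omega⟩ : Fin n) (⟨n - 1, by omega⟩ : Fin n) lam' = 0 :=
    Matrix.single_mul_single_of_ne _ _ _ _ h1 _
  unfold gmat
  simp only [add_mul, mul_add, one_mul, mul_one, z1, z2, z3, z4,
    Matrix.single_add, add_zero]
  abel

lemma gmat_zero (n : ℕ) (hn : 4 ≤ n) : gmat n hn 0 0 = 1 := by
  unfold gmat
  simp

lemma gmat_inv (n : ℕ) (hn : 4 ≤ n) (lam xi : ℝ) :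
    (gmat n hn lam xi)⁻¹ = gmat n hn (-lam) (-xi) := by
  apply Matrix.inv_eq_right_inv
  rw [gmat_mul_gmat]
  simp [gmat_zero]

lemma gmat_mul_self_inv (n : ℕ) (hn : 4 ≤ n) (lam xi : ℝ) :
    (gmat n hn lam xi)⁻¹ * gmat n hn lam xi = 1 := by
  rw [gmat_inv, gmat_mul_gmat]
  simp [gmat_zero]

lemma gmat_self_mul_inv (n : ℕ) (hn : 4 ≤ n) (lam xi : ℝ) :
    gmat n hn lam xi * (gmat n hn lam xi)⁻¹ = 1 := by
  rw [gmat_inv, gmat_mul_gmat]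
  simp [gmat_zero]

lemma ginv_xvec (n : ℕ) (hn : 4 ≤ n) (lam xi : ℝ) (i : Fin n) :
    (gmat n hn lam xi)⁻¹.mulVec (xvec n hn lam xi i) = Pi.single i 1 := by
  rw [xvec, Matrix.mulVec_mulVec, gmat_mul_self_inv, Matrix.one_mulVec]

lemma ip0_single_right (n : ℕ) (v : Fin n → ℝ) (j : Fin n) :
    ip0 n v (Pi.single j 1) = eps n j * v j := by
  unfold ip0
  rw [Finset.sum_eq_single j]
  · simp
  · intro k _ hk
    simp [Pi.single_apply, (Ne.symm hk : j ≠ k)]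
  · simp

lemma ipg_xvec (n : ℕ) (hn : 4 ≤ n) (lam xi : ℝ) (i j : Fin n) :
    ipg n hn lam xi (xvec n hn lam xi i) (xvec n hn lam xi j)
      = if i = j then eps n i else 0 := by
  rw [ipg, ginv_xvec, ginv_xvec, ip0_single_right]
  rcases eq_or_ne i j with rfl | h
  · simp
  · simp [Pi.single_apply, h]

lemma ipg_add_left (n : ℕ) (hn : 4 ≤ n) (lam xi : ℝ) (u v w : Fin n → ℝ) :
    ipg n hn lam xi (u + v) w = ipg n hn lam xi u w + ipg n hn lam xi v w := by
  unfold ipg ip0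
  rw [Matrix.mulVec_add, ← Finset.sum_add_distrib]
  apply Finset.sum_congr rfl
  intro k _
  simp
  ring

lemma ipg_smul_left (n : ℕ) (hn : 4 ≤ n) (lam xi : ℝ) (c : ℝ) (u w : Fin n → ℝ) :
    ipg n hn lam xi (c • u) w = c * ipg n hn lam xi u w := by
  unfold ipg ip0
  rw [Matrix.mulVec_smul, Finset.mul_sum]
  apply Finset.sum_congr rfl
  intro k _
  simp
  ring

lemma ipg_sub_left (n : ℕ) (hn : 4 ≤ n) (lam xi : ℝ) (u v w : Fin n → ℝ) :
    ipg n hn lam xi (u - v) w = ipg n hn lam xi u w - ipg n hn lam xi v w := by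
  have := ipg_add_left n hn lam xi (u - v) v w
  rw [sub_add_cancel] at this
  linarith

lemma ipg_zero_left (n : ℕ) (hn : 4 ≤ n) (lam xi : ℝ) (w : Fin n → ℝ) :
    ipg n hn lam xi 0 w = 0 := by
  unfold ipg ip0
  simp [Matrix.mulVec_zero]

lemma ipg_neg_left (n : ℕ) (hn : 4 ≤ n) (lam xi : ℝ) (u w : Fin n → ℝ) :
    ipg n hn lam xi (-u) w = -ipg n hn lam xi u w := by
  have := ipg_add_left n hn lam xi (-u) u w
  rw [neg_add_cancel, ipg_zero_left] at this
  linarith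

lemma eps_ne_zero (n : ℕ) (j : Fin n) : eps n j ≠ 0 := by
  unfold eps
  split <;> norm_num

lemma eq_of_ipg (n : ℕ) (hn : 4 ≤ n) (lam xi : ℝ) (v w : Fin n → ℝ)
    (h : ∀ j, ipg n hn lam xi v (xvec n hn lam xi j)
            = ipg n hn lam xi w (xvec n hn lam xi j)) : v = w := by
  have h3 : (gmat n hn lam xi)⁻¹.mulVec v = (gmat n hn lam xi)⁻¹.mulVec w := by
    funext j
    have hj := h j
    rw [ipg, ipg, ginv_xvec] at hj
    rw [ip0_single_right, ip0_single_right] at hj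
    exact mul_left_cancel₀ (eps_ne_zero n j) hj
  have h4 := congrArg (fun u => (gmat n hn lam xi).mulVec u) h3
  simpa [Matrix.mulVec_mulVec, gmat_self_mul_inv, Matrix.one_mulVec] using h4

/-- First coordinate of `xvec i`. -/
def cfv (n : ℕ) (lam xi : ℝ) (i : Fin n) : ℝ :=
  (if (i : ℕ) = 0 then 1 else 0) + (if (i : ℕ) = n - 2 then xi else 0)
    + (if (i : ℕ) = n - 1 then lam else 0)

/-- Second coordinate of `xvec i`. -/
def dfv (n : ℕ) (i : Fin n) : ℝ := if (i : ℕ) = 1 then 1 else 0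

lemma gmat_mulVec (n : ℕ) (hn : 4 ≤ n) (lam xi : ℝ) (v : Fin n → ℝ) :
    (gmat n hn lam xi).mulVec v
      = v + (xi * v ⟨n - 2, by omega⟩ + lam * v ⟨n - 1, by omega⟩) •
          (Pi.single (⟨0, by omega⟩ : Fin n) 1 : Fin n → ℝ) := by
  unfold gmat
  rw [Matrix.add_mulVec, Matrix.add_mulVec, Matrix.one_mulVec, stdBasis_mulVec, stdBasis_mulVec]
  funext k
  simp [Pi.single_apply]
  split_ifs <;> ring

set_option maxHeartbeats 4000000 in
lemma xvec_apply0 (n : ℕ) (hn : 4 ≤ n) (lam xi : ℝ) (i : Fin n) :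
    xvec n hn lam xi i ⟨0, by omega⟩ = cfv n lam xi i := by
  rw [xvec, gmat_mulVec]
  simp only [Pi.add_apply, Pi.smul_apply, smul_eq_mul, Pi.single_apply, Fin.ext_iff, Fin.val_mk]
  unfold cfv
  split_ifs <;> first | ring1 | (exfalso; omega) | exact ‹False›.elim

set_option maxHeartbeats 4000000 in
lemma xvec_apply1 (n : ℕ) (hn : 4 ≤ n) (lam xi : ℝ) (i : Fin n) :
    xvec n hn lam xi i ⟨1, by omega⟩ = dfv n i := by
  rw [xvec, gmat_mulVec]
  simp only [Pi.add_apply, Pi.smul_apply, smul_eq_mul, Pi.single_apply, Fin.ext_iff, Fin.val_mk]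
  unfold dfv
  split_ifs <;> first | ring1 | (exfalso; omega) | exact ‹False›.elim

lemma bral_xvec (n : ℕ) (hn : 4 ≤ n) (lam xi : ℝ) (a b : Fin n) :
    bral n hn (xvec n hn lam xi a) (xvec n hn lam xi b)
      = (cfv n lam xi a * dfv n b - dfv n a * cfv n lam xi b) •
          (Pi.single (⟨n - 1, by omega⟩ : Fin n) 1 : Fin n → ℝ) := by
  rw [bral, xvec_apply0, xvec_apply0, xvec_apply1, xvec_apply1]

set_option maxHeartbeats 4000000 in
lemma single_nm1_eq (n : ℕ) (hn : 4 ≤ n) (lam xi : ℝ) :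
    (Pi.single (⟨n - 1, by omega⟩ : Fin n) 1 : Fin n → ℝ)
      = xvec n hn lam xi ⟨n - 1, by omega⟩ - lam • xvec n hn lam xi ⟨0, by omega⟩ := by
  rw [xvec, xvec, gmat_mulVec, gmat_mulVec]
  funext k
  simp only [Pi.add_apply, Pi.sub_apply, Pi.smul_apply, smul_eq_mul, Pi.single_apply,
    Fin.ext_iff, Fin.val_mk]
  split_ifs <;> first | ring1 | (exfalso; omega) | exact ‹False›.elim

set_option maxHeartbeats 4000000 in
lemma ipg_single_nm1 (n : ℕ) (hn : 4 ≤ n) (lam xi : ℝ) (j : Fin n) :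
    ipg n hn lam xi (Pi.single (⟨n - 1, by omega⟩ : Fin n) 1) (xvec n hn lam xi j)
      = (if (j : ℕ) = n - 1 then (-1 : ℝ) else 0)
          - lam * (if (j : ℕ) = 0 then (1 : ℝ) else 0) := by
  rw [single_nm1_eq n hn lam xi, ipg_sub_left, ipg_smul_left, ipg_xvec, ipg_xvec]
  have e1 : eps n ⟨n - 1, by omega⟩ = -1 := by
    unfold eps; rw [if_neg (show ¬((n - 1 : ℕ) < n - 1) by omega)]
  have e0 : eps n ⟨0, by omega⟩ = 1 := by
    unfold eps; rw [if_pos (show (0 : ℕ) < n - 1 by omega)]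
  rw [e1, e0]
  simp only [Fin.ext_iff, Fin.val_mk]
  split_ifs <;> first | ring1 | (exfalso; omega) | exact ‹False›.elim

lemma ipg_bral_xvec (n : ℕ) (hn : 4 ≤ n) (lam xi : ℝ) (a b j : Fin n) :
    ipg n hn lam xi (bral n hn (xvec n hn lam xi a) (xvec n hn lam xi b))
        (xvec n hn lam xi j)
      = (cfv n lam xi a * dfv n b - dfv n a * cfv n lam xi b) *
          ((if (j : ℕ) = n - 1 then (-1 : ℝ) else 0)
            - lam * (if (j : ℕ) = 0 then (1 : ℝ) else 0)) := by
  rw [bral_xvec, ipg_smul_left, ipg_single_nm1]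

lemma key_lc (n : ℕ) (hn : 4 ≤ n) (lam xi : ℝ)
    (nab : (Fin n → ℝ) →ₗ[ℝ] (Fin n → ℝ) →ₗ[ℝ] (Fin n → ℝ))
    (hK : ∀ X Y Z : Fin n → ℝ,
      2 * ipg n hn lam xi (nab X Y) Z
        = ipg n hn lam xi (bral n hn X Y) Z - ipg n hn lam xi (bral n hn Y Z) X
          + ipg n hn lam xi (bral n hn Z X) Y)
    (a b : Fin n) (W : Fin n → ℝ)
    (h : ∀ j : Fin n, 2 * ipg n hn lam xi W (xvec n hn lam xi j)
      = ipg n hn lam xi (bral n hn (xvec n hn lam xi a) (xvec n hn lam xi b))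
          (xvec n hn lam xi j)
        - ipg n hn lam xi (bral n hn (xvec n hn lam xi b) (xvec n hn lam xi j))
            (xvec n hn lam xi a)
        + ipg n hn lam xi (bral n hn (xvec n hn lam xi j) (xvec n hn lam xi a))
            (xvec n hn lam xi b)) :
    nab (xvec n hn lam xi a) (xvec n hn lam xi b) = W := by
  apply eq_of_ipg n hn lam xi
  intro j
  have h1 := hK (xvec n hn lam xi a) (xvec n hn lam xi b) (xvec n hn lam xi j)
  have h2 := h j
  linarith

lemma cfv_mk0 (n : ℕ) (hn : 4 ≤ n) (lam xi : ℝ) (h : 0 < n) :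
    cfv n lam xi ⟨0, h⟩ = 1 := by
  unfold cfv
  rw [if_pos rfl, if_neg (by simp only [Fin.val_mk]; omega), if_neg (by simp only [Fin.val_mk]; omega)]
  ring

lemma cfv_mk1 (n : ℕ) (hn : 4 ≤ n) (lam xi : ℝ) (h : 1 < n) :
    cfv n lam xi ⟨1, h⟩ = 0 := by
  unfold cfv
  rw [if_neg (by simp only [Fin.val_mk]; omega), if_neg (by simp only [Fin.val_mk]; omega), if_neg (by simp only [Fin.val_mk]; omega)]
  ring

lemma cfv_mknm2 (n : ℕ) (hn : 4 ≤ n) (lam xi : ℝ) (h : n - 2 < n) :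
    cfv n lam xi ⟨n - 2, h⟩ = xi := by
  unfold cfv
  rw [if_neg (by simp only [Fin.val_mk]; omega), if_pos rfl, if_neg (by simp only [Fin.val_mk]; omega)]
  ring

lemma cfv_mknm1 (n : ℕ) (hn : 4 ≤ n) (lam xi : ℝ) (h : n - 1 < n) :
    cfv n lam xi ⟨n - 1, h⟩ = lam := by
  unfold cfv
  rw [if_neg (by simp only [Fin.val_mk]; omega), if_neg (by simp only [Fin.val_mk]; omega), if_pos rfl]
  ring

lemma dfv_mk0 (n : ℕ) (hn : 4 ≤ n) (h : 0 < n) : dfv n ⟨0, h⟩ = 0 := by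
  unfold dfv
  rw [if_neg (by simp only [Fin.val_mk]; omega)]

lemma dfv_mk1 (n : ℕ) (hn : 4 ≤ n) (h : 1 < n) : dfv n ⟨1, h⟩ = 1 := by
  unfold dfv
  rw [if_pos rfl]

lemma dfv_mknm2 (n : ℕ) (hn : 4 ≤ n) (h : n - 2 < n) : dfv n ⟨n - 2, h⟩ = 0 := by
  unfold dfv
  rw [if_neg (by simp only [Fin.val_mk]; omega)]

lemma dfv_mknm1 (n : ℕ) (hn : 4 ≤ n) (h : n - 1 < n) : dfv n ⟨n - 1, h⟩ = 0 := by
  unfold dfv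
  rw [if_neg (by simp only [Fin.val_mk]; omega)]

lemma ipg_xvec_mk0 (n : ℕ) (hn : 4 ≤ n) (lam xi : ℝ) (h : 0 < n) (j : Fin n) :
    ipg n hn lam xi (xvec n hn lam xi ⟨0, h⟩) (xvec n hn lam xi j)
      = if (j : ℕ) = 0 then 1 else 0 := by
  rw [ipg_xvec]
  have e0 : eps n ⟨0, h⟩ = 1 := by unfold eps; rw [if_pos (show (0 : ℕ) < n - 1 by omega)]
  rw [e0]
  simp only [Fin.ext_iff, Fin.val_mk]
  split_ifs <;> first | rfl | (exfalso; omega) | exact ‹False›.elim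

lemma ipg_xvec_mk1 (n : ℕ) (hn : 4 ≤ n) (lam xi : ℝ) (h : 1 < n) (j : Fin n) :
    ipg n hn lam xi (xvec n hn lam xi ⟨1, h⟩) (xvec n hn lam xi j)
      = if (j : ℕ) = 1 then 1 else 0 := by
  rw [ipg_xvec]
  have e0 : eps n ⟨1, h⟩ = 1 := by unfold eps; rw [if_pos (show (1 : ℕ) < n - 1 by omega)]
  rw [e0]
  simp only [Fin.ext_iff, Fin.val_mk]
  split_ifs <;> first | rfl | (exfalso; omega) | exact ‹False›.elim

lemma ipg_xvec_mknm2 (n : ℕ) (hn : 4 ≤ n) (lam xi : ℝ) (h : n - 2 < n) (j : Fin n) :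
    ipg n hn lam xi (xvec n hn lam xi ⟨n - 2, h⟩) (xvec n hn lam xi j)
      = if (j : ℕ) = n - 2 then 1 else 0 := by
  rw [ipg_xvec]
  have e0 : eps n ⟨n - 2, h⟩ = 1 := by unfold eps; rw [if_pos (show (n - 2 : ℕ) < n - 1 by omega)]
  rw [e0]
  simp only [Fin.ext_iff, Fin.val_mk]
  split_ifs <;> first | rfl | (exfalso; omega) | exact ‹False›.elim

lemma ipg_xvec_mknm1 (n : ℕ) (hn : 4 ≤ n) (lam xi : ℝ) (h : n - 1 < n) (j : Fin n) :
    ipg n hn lam xi (xvec n hn lam xi ⟨n - 1, h⟩) (xvec n hn lam xi j)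
      = if (j : ℕ) = n - 1 then (-1 : ℝ) else 0 := by
  rw [ipg_xvec]
  have e0 : eps n ⟨n - 1, h⟩ = -1 := by unfold eps; rw [if_neg (show ¬((n - 1 : ℕ) < n - 1) by omega)]
  rw [e0]
  simp only [Fin.ext_iff, Fin.val_mk]
  split_ifs <;> first | rfl | (exfalso; omega) | exact ‹False›.elim

lemma ipg_bral_at0 (n : ℕ) (hn : 4 ≤ n) (lam xi : ℝ) (h : 0 < n) (b j : Fin n) :
    ipg n hn lam xi (bral n hn (xvec n hn lam xi b) (xvec n hn lam xi j))
        (xvec n hn lam xi ⟨0, h⟩)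
      = (cfv n lam xi b * dfv n j - dfv n b * cfv n lam xi j) * (-lam) := by
  rw [ipg_bral_xvec]
  congr 1
  rw [if_neg (by simp only [Fin.val_mk]; omega), if_pos rfl]
  ring

lemma ipg_bral_at1 (n : ℕ) (hn : 4 ≤ n) (lam xi : ℝ) (h : 1 < n) (b j : Fin n) :
    ipg n hn lam xi (bral n hn (xvec n hn lam xi b) (xvec n hn lam xi j))
        (xvec n hn lam xi ⟨1, h⟩)
      = 0 := by
  rw [ipg_bral_xvec]
  rw [if_neg (by simp only [Fin.val_mk]; omega), if_neg (by simp only [Fin.val_mk]; omega)]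
  ring

lemma ipg_bral_atnm2 (n : ℕ) (hn : 4 ≤ n) (lam xi : ℝ) (h : n - 2 < n) (b j : Fin n) :
    ipg n hn lam xi (bral n hn (xvec n hn lam xi b) (xvec n hn lam xi j))
        (xvec n hn lam xi ⟨n - 2, h⟩)
      = 0 := by
  rw [ipg_bral_xvec]
  rw [if_neg (by simp only [Fin.val_mk]; omega), if_neg (by simp only [Fin.val_mk]; omega)]
  ring

lemma ipg_bral_atnm1 (n : ℕ) (hn : 4 ≤ n) (lam xi : ℝ) (h : n - 1 < n) (b j : Fin n) :
    ipg n hn lam xi (bral n hn (xvec n hn lam xi b) (xvec n hn lam xi j))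
        (xvec n hn lam xi ⟨n - 1, h⟩)
      = (cfv n lam xi b * dfv n j - dfv n b * cfv n lam xi j) * (-1) := by
  rw [ipg_bral_xvec]
  congr 1
  rw [if_pos rfl, if_neg (by simp only [Fin.val_mk]; omega)]
  ring

end AuxLC

set_option maxHeartbeats 4000000

/-- the values of the Levi-Civita connection (any bilinear map satisfying
the Koszul formula for `⟨·,·⟩_{λ,ξ}`) on the pseudo-orthonormal basis `x_i = g_{λ,ξ}e_i`. -/
theorem stmt14 (n : ℕ) (hn : 4 ≤ n) (lam xi : ℝ)
    (nab : (Fin n → ℝ) →ₗ[ℝ] (Fin n → ℝ) →ₗ[ℝ] (Fin n → ℝ))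
    (hK : ∀ X Y Z : Fin n → ℝ,
      2 * ipg n hn lam xi (nab X Y) Z
        = ipg n hn lam xi (bral n hn X Y) Z - ipg n hn lam xi (bral n hn Y Z) X
          + ipg n hn lam xi (bral n hn Z X) Y) :
    nab (xvec n hn lam xi ⟨0, by omega⟩) (xvec n hn lam xi ⟨0, by omega⟩) = lam • (xvec n hn lam xi ⟨1, by omega⟩) ∧
    nab (xvec n hn lam xi ⟨0, by omega⟩) (xvec n hn lam xi ⟨1, by omega⟩) = (-lam) • (xvec n hn lam xi ⟨0, by omega⟩) + (-(lam * xi / 2)) • (xvec n hn lam xi ⟨n - 2, by omega⟩) + ((lam ^ 2 + 1) / 2) • (xvec n hn lam xi ⟨n - 1, by omega⟩) ∧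
    nab (xvec n hn lam xi ⟨0, by omega⟩) (xvec n hn lam xi ⟨n - 2, by omega⟩) = (lam * xi / 2) • (xvec n hn lam xi ⟨1, by omega⟩) ∧
    nab (xvec n hn lam xi ⟨0, by omega⟩) (xvec n hn lam xi ⟨n - 1, by omega⟩) = ((lam ^ 2 + 1) / 2) • (xvec n hn lam xi ⟨1, by omega⟩) ∧
    nab (xvec n hn lam xi ⟨1, by omega⟩) (xvec n hn lam xi ⟨0, by omega⟩) = (-(lam * xi / 2)) • (xvec n hn lam xi ⟨n - 2, by omega⟩) + ((lam ^ 2 - 1) / 2) • (xvec n hn lam xi ⟨n - 1, by omega⟩) ∧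
    nab (xvec n hn lam xi ⟨1, by omega⟩) (xvec n hn lam xi ⟨1, by omega⟩) = 0 ∧
    nab (xvec n hn lam xi ⟨1, by omega⟩) (xvec n hn lam xi ⟨n - 2, by omega⟩) = (xi / 2) • (lam • (xvec n hn lam xi ⟨0, by omega⟩) - (xvec n hn lam xi ⟨n - 1, by omega⟩)) ∧
    nab (xvec n hn lam xi ⟨1, by omega⟩) (xvec n hn lam xi ⟨n - 1, by omega⟩) = ((lam ^ 2 - 1) / 2) • (xvec n hn lam xi ⟨0, by omega⟩) + (-(xi / 2)) • (xvec n hn lam xi ⟨n - 2, by omega⟩) ∧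
    nab (xvec n hn lam xi ⟨n - 2, by omega⟩) (xvec n hn lam xi ⟨0, by omega⟩) = (lam * xi / 2) • (xvec n hn lam xi ⟨1, by omega⟩) ∧
    nab (xvec n hn lam xi ⟨n - 2, by omega⟩) (xvec n hn lam xi ⟨1, by omega⟩) = -((xi / 2) • (lam • (xvec n hn lam xi ⟨0, by omega⟩) - (xvec n hn lam xi ⟨n - 1, by omega⟩))) ∧
    nab (xvec n hn lam xi ⟨n - 2, by omega⟩) (xvec n hn lam xi ⟨n - 2, by omega⟩) = 0 ∧
    nab (xvec n hn lam xi ⟨n - 2, by omega⟩) (xvec n hn lam xi ⟨n - 1, by omega⟩) = (xi / 2) • (xvec n hn lam xi ⟨1, by omega⟩) ∧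
    nab (xvec n hn lam xi ⟨n - 1, by omega⟩) (xvec n hn lam xi ⟨0, by omega⟩) = ((lam ^ 2 + 1) / 2) • (xvec n hn lam xi ⟨1, by omega⟩) ∧
    nab (xvec n hn lam xi ⟨n - 1, by omega⟩) (xvec n hn lam xi ⟨1, by omega⟩) = (-((lam ^ 2 + 1) / 2)) • (xvec n hn lam xi ⟨0, by omega⟩) + (-(xi / 2)) • (xvec n hn lam xi ⟨n - 2, by omega⟩) + lam • (xvec n hn lam xi ⟨n - 1, by omega⟩) ∧
    nab (xvec n hn lam xi ⟨n - 1, by omega⟩) (xvec n hn lam xi ⟨n - 2, by omega⟩) = (xi / 2) • (xvec n hn lam xi ⟨1, by omega⟩) ∧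
    nab (xvec n hn lam xi ⟨n - 1, by omega⟩) (xvec n hn lam xi ⟨n - 1, by omega⟩) = lam • (xvec n hn lam xi ⟨1, by omega⟩) ∧
    (∀ i j : Fin n, (2 ≤ (i : ℕ) ∧ (i : ℕ) ≤ n - 3) ∨ (2 ≤ (j : ℕ) ∧ (j : ℕ) ≤ n - 3) →
      nab (xvec n hn lam xi i) (xvec n hn lam xi j) = 0) := by
  have hh0 : (0 : ℕ) < n := by omega
  have hh1 : (1 : ℕ) < n := by omega
  have hh2 : n - 2 < n := by omega
  have hh3 : n - 1 < n := by omega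
  refine ⟨?_, ?_, ?_, ?_, ?_, ?_, ?_, ?_, ?_, ?_, ?_, ?_, ?_, ?_, ?_, ?_, ?_⟩
  · apply key_lc n hn lam xi nab hK
    intro j
    rw [ipg_bral_xvec]
    simp only [ipg_bral_at0 n hn lam xi hh0, ipg_bral_at1 n hn lam xi hh1,
      ipg_bral_atnm2 n hn lam xi hh2, ipg_bral_atnm1 n hn lam xi hh3]
    simp only [cfv_mk0 n hn lam xi hh0, cfv_mk1 n hn lam xi hh1,
      cfv_mknm2 n hn lam xi hh2, cfv_mknm1 n hn lam xi hh3,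
      dfv_mk0 n hn hh0, dfv_mk1 n hn hh1, dfv_mknm2 n hn hh2, dfv_mknm1 n hn hh3]
    simp only [ipg_add_left, ipg_sub_left, ipg_smul_left, ipg_neg_left, ipg_zero_left,
      ipg_xvec_mk0 n hn lam xi hh0, ipg_xvec_mk1 n hn lam xi hh1,
      ipg_xvec_mknm2 n hn lam xi hh2, ipg_xvec_mknm1 n hn lam xi hh3, cfv, dfv]
    split_ifs <;> first | ring1 | (exfalso; omega) | exact ‹False›.elim
  · apply key_lc n hn lam xi nab hK
    intro j
    rw [ipg_bral_xvec]
    simp only [ipg_bral_at0 n hn lam xi hh0, ipg_bral_at1 n hn lam xi hh1,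
      ipg_bral_atnm2 n hn lam xi hh2, ipg_bral_atnm1 n hn lam xi hh3]
    simp only [cfv_mk0 n hn lam xi hh0, cfv_mk1 n hn lam xi hh1,
      cfv_mknm2 n hn lam xi hh2, cfv_mknm1 n hn lam xi hh3,
      dfv_mk0 n hn hh0, dfv_mk1 n hn hh1, dfv_mknm2 n hn hh2, dfv_mknm1 n hn hh3]
    simp only [ipg_add_left, ipg_sub_left, ipg_smul_left, ipg_neg_left, ipg_zero_left,
      ipg_xvec_mk0 n hn lam xi hh0, ipg_xvec_mk1 n hn lam xi hh1,
      ipg_xvec_mknm2 n hn lam xi hh2, ipg_xvec_mknm1 n hn lam xi hh3, cfv, dfv]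
    split_ifs <;> first | ring1 | (exfalso; omega) | exact ‹False›.elim
  · apply key_lc n hn lam xi nab hK
    intro j
    rw [ipg_bral_xvec]
    simp only [ipg_bral_at0 n hn lam xi hh0, ipg_bral_at1 n hn lam xi hh1,
      ipg_bral_atnm2 n hn lam xi hh2, ipg_bral_atnm1 n hn lam xi hh3]
    simp only [cfv_mk0 n hn lam xi hh0, cfv_mk1 n hn lam xi hh1,
      cfv_mknm2 n hn lam xi hh2, cfv_mknm1 n hn lam xi hh3,
      dfv_mk0 n hn hh0, dfv_mk1 n hn hh1, dfv_mknm2 n hn hh2, dfv_mknm1 n hn hh3]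
    simp only [ipg_add_left, ipg_sub_left, ipg_smul_left, ipg_neg_left, ipg_zero_left,
      ipg_xvec_mk0 n hn lam xi hh0, ipg_xvec_mk1 n hn lam xi hh1,
      ipg_xvec_mknm2 n hn lam xi hh2, ipg_xvec_mknm1 n hn lam xi hh3, cfv, dfv]
    split_ifs <;> first | ring1 | (exfalso; omega) | exact ‹False›.elim
  · apply key_lc n hn lam xi nab hK
    intro j
    rw [ipg_bral_xvec]
    simp only [ipg_bral_at0 n hn lam xi hh0, ipg_bral_at1 n hn lam xi hh1,
      ipg_bral_atnm2 n hn lam xi hh2, ipg_bral_atnm1 n hn lam xi hh3]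
    simp only [cfv_mk0 n hn lam xi hh0, cfv_mk1 n hn lam xi hh1,
      cfv_mknm2 n hn lam xi hh2, cfv_mknm1 n hn lam xi hh3,
      dfv_mk0 n hn hh0, dfv_mk1 n hn hh1, dfv_mknm2 n hn hh2, dfv_mknm1 n hn hh3]
    simp only [ipg_add_left, ipg_sub_left, ipg_smul_left, ipg_neg_left, ipg_zero_left,
      ipg_xvec_mk0 n hn lam xi hh0, ipg_xvec_mk1 n hn lam xi hh1,
      ipg_xvec_mknm2 n hn lam xi hh2, ipg_xvec_mknm1 n hn lam xi hh3, cfv, dfv]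
    split_ifs <;> first | ring1 | (exfalso; omega) | exact ‹False›.elim
  · apply key_lc n hn lam xi nab hK
    intro j
    rw [ipg_bral_xvec]
    simp only [ipg_bral_at0 n hn lam xi hh0, ipg_bral_at1 n hn lam xi hh1,
      ipg_bral_atnm2 n hn lam xi hh2, ipg_bral_atnm1 n hn lam xi hh3]
    simp only [cfv_mk0 n hn lam xi hh0, cfv_mk1 n hn lam xi hh1,
      cfv_mknm2 n hn lam xi hh2, cfv_mknm1 n hn lam xi hh3,
      dfv_mk0 n hn hh0, dfv_mk1 n hn hh1, dfv_mknm2 n hn hh2, dfv_mknm1 n hn hh3]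
    simp only [ipg_add_left, ipg_sub_left, ipg_smul_left, ipg_neg_left, ipg_zero_left,
      ipg_xvec_mk0 n hn lam xi hh0, ipg_xvec_mk1 n hn lam xi hh1,
      ipg_xvec_mknm2 n hn lam xi hh2, ipg_xvec_mknm1 n hn lam xi hh3, cfv, dfv]
    split_ifs <;> first | ring1 | (exfalso; omega) | exact ‹False›.elim
  · apply key_lc n hn lam xi nab hK
    intro j
    rw [ipg_bral_xvec]
    simp only [ipg_bral_at0 n hn lam xi hh0, ipg_bral_at1 n hn lam xi hh1,
      ipg_bral_atnm2 n hn lam xi hh2, ipg_bral_atnm1 n hn lam xi hh3]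
    simp only [cfv_mk0 n hn lam xi hh0, cfv_mk1 n hn lam xi hh1,
      cfv_mknm2 n hn lam xi hh2, cfv_mknm1 n hn lam xi hh3,
      dfv_mk0 n hn hh0, dfv_mk1 n hn hh1, dfv_mknm2 n hn hh2, dfv_mknm1 n hn hh3]
    simp only [ipg_add_left, ipg_sub_left, ipg_smul_left, ipg_neg_left, ipg_zero_left,
      ipg_xvec_mk0 n hn lam xi hh0, ipg_xvec_mk1 n hn lam xi hh1,
      ipg_xvec_mknm2 n hn lam xi hh2, ipg_xvec_mknm1 n hn lam xi hh3, cfv, dfv]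
    split_ifs <;> first | ring1 | (exfalso; omega) | exact ‹False›.elim
  · apply key_lc n hn lam xi nab hK
    intro j
    rw [ipg_bral_xvec]
    simp only [ipg_bral_at0 n hn lam xi hh0, ipg_bral_at1 n hn lam xi hh1,
      ipg_bral_atnm2 n hn lam xi hh2, ipg_bral_atnm1 n hn lam xi hh3]
    simp only [cfv_mk0 n hn lam xi hh0, cfv_mk1 n hn lam xi hh1,
      cfv_mknm2 n hn lam xi hh2, cfv_mknm1 n hn lam xi hh3,
      dfv_mk0 n hn hh0, dfv_mk1 n hn hh1, dfv_mknm2 n hn hh2, dfv_mknm1 n hn hh3]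
    simp only [ipg_add_left, ipg_sub_left, ipg_smul_left, ipg_neg_left, ipg_zero_left,
      ipg_xvec_mk0 n hn lam xi hh0, ipg_xvec_mk1 n hn lam xi hh1,
      ipg_xvec_mknm2 n hn lam xi hh2, ipg_xvec_mknm1 n hn lam xi hh3, cfv, dfv]
    split_ifs <;> first | ring1 | (exfalso; omega) | exact ‹False›.elim
  · apply key_lc n hn lam xi nab hK
    intro j
    rw [ipg_bral_xvec]
    simp only [ipg_bral_at0 n hn lam xi hh0, ipg_bral_at1 n hn lam xi hh1,
      ipg_bral_atnm2 n hn lam xi hh2, ipg_bral_atnm1 n hn lam xi hh3]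
    simp only [cfv_mk0 n hn lam xi hh0, cfv_mk1 n hn lam xi hh1,
      cfv_mknm2 n hn lam xi hh2, cfv_mknm1 n hn lam xi hh3,
      dfv_mk0 n hn hh0, dfv_mk1 n hn hh1, dfv_mknm2 n hn hh2, dfv_mknm1 n hn hh3]
    simp only [ipg_add_left, ipg_sub_left, ipg_smul_left, ipg_neg_left, ipg_zero_left,
      ipg_xvec_mk0 n hn lam xi hh0, ipg_xvec_mk1 n hn lam xi hh1,
      ipg_xvec_mknm2 n hn lam xi hh2, ipg_xvec_mknm1 n hn lam xi hh3, cfv, dfv]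
    split_ifs <;> first | ring1 | (exfalso; omega) | exact ‹False›.elim
  · apply key_lc n hn lam xi nab hK
    intro j
    rw [ipg_bral_xvec]
    simp only [ipg_bral_at0 n hn lam xi hh0, ipg_bral_at1 n hn lam xi hh1,
      ipg_bral_atnm2 n hn lam xi hh2, ipg_bral_atnm1 n hn lam xi hh3]
    simp only [cfv_mk0 n hn lam xi hh0, cfv_mk1 n hn lam xi hh1,
      cfv_mknm2 n hn lam xi hh2, cfv_mknm1 n hn lam xi hh3,
      dfv_mk0 n hn hh0, dfv_mk1 n hn hh1, dfv_mknm2 n hn hh2, dfv_mknm1 n hn hh3]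
    simp only [ipg_add_left, ipg_sub_left, ipg_smul_left, ipg_neg_left, ipg_zero_left,
      ipg_xvec_mk0 n hn lam xi hh0, ipg_xvec_mk1 n hn lam xi hh1,
      ipg_xvec_mknm2 n hn lam xi hh2, ipg_xvec_mknm1 n hn lam xi hh3, cfv, dfv]
    split_ifs <;> first | ring1 | (exfalso; omega) | exact ‹False›.elim
  · apply key_lc n hn lam xi nab hK
    intro j
    rw [ipg_bral_xvec]
    simp only [ipg_bral_at0 n hn lam xi hh0, ipg_bral_at1 n hn lam xi hh1,
      ipg_bral_atnm2 n hn lam xi hh2, ipg_bral_atnm1 n hn lam xi hh3]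
    simp only [cfv_mk0 n hn lam xi hh0, cfv_mk1 n hn lam xi hh1,
      cfv_mknm2 n hn lam xi hh2, cfv_mknm1 n hn lam xi hh3,
      dfv_mk0 n hn hh0, dfv_mk1 n hn hh1, dfv_mknm2 n hn hh2, dfv_mknm1 n hn hh3]
    simp only [ipg_add_left, ipg_sub_left, ipg_smul_left, ipg_neg_left, ipg_zero_left,
      ipg_xvec_mk0 n hn lam xi hh0, ipg_xvec_mk1 n hn lam xi hh1,
      ipg_xvec_mknm2 n hn lam xi hh2, ipg_xvec_mknm1 n hn lam xi hh3, cfv, dfv]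
    split_ifs <;> first | ring1 | (exfalso; omega) | exact ‹False›.elim
  · apply key_lc n hn lam xi nab hK
    intro j
    rw [ipg_bral_xvec]
    simp only [ipg_bral_at0 n hn lam xi hh0, ipg_bral_at1 n hn lam xi hh1,
      ipg_bral_atnm2 n hn lam xi hh2, ipg_bral_atnm1 n hn lam xi hh3]
    simp only [cfv_mk0 n hn lam xi hh0, cfv_mk1 n hn lam xi hh1,
      cfv_mknm2 n hn lam xi hh2, cfv_mknm1 n hn lam xi hh3,
      dfv_mk0 n hn hh0, dfv_mk1 n hn hh1, dfv_mknm2 n hn hh2, dfv_mknm1 n hn hh3]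
    simp only [ipg_add_left, ipg_sub_left, ipg_smul_left, ipg_neg_left, ipg_zero_left,
      ipg_xvec_mk0 n hn lam xi hh0, ipg_xvec_mk1 n hn lam xi hh1,
      ipg_xvec_mknm2 n hn lam xi hh2, ipg_xvec_mknm1 n hn lam xi hh3, cfv, dfv]
    split_ifs <;> first | ring1 | (exfalso; omega) | exact ‹False›.elim
  · apply key_lc n hn lam xi nab hK
    intro j
    rw [ipg_bral_xvec]
    simp only [ipg_bral_at0 n hn lam xi hh0, ipg_bral_at1 n hn lam xi hh1,
      ipg_bral_atnm2 n hn lam xi hh2, ipg_bral_atnm1 n hn lam xi hh3]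
    simp only [cfv_mk0 n hn lam xi hh0, cfv_mk1 n hn lam xi hh1,
      cfv_mknm2 n hn lam xi hh2, cfv_mknm1 n hn lam xi hh3,
      dfv_mk0 n hn hh0, dfv_mk1 n hn hh1, dfv_mknm2 n hn hh2, dfv_mknm1 n hn hh3]
    simp only [ipg_add_left, ipg_sub_left, ipg_smul_left, ipg_neg_left, ipg_zero_left,
      ipg_xvec_mk0 n hn lam xi hh0, ipg_xvec_mk1 n hn lam xi hh1,
      ipg_xvec_mknm2 n hn lam xi hh2, ipg_xvec_mknm1 n hn lam xi hh3, cfv, dfv]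
    split_ifs <;> first | ring1 | (exfalso; omega) | exact ‹False›.elim
  · apply key_lc n hn lam xi nab hK
    intro j
    rw [ipg_bral_xvec]
    simp only [ipg_bral_at0 n hn lam xi hh0, ipg_bral_at1 n hn lam xi hh1,
      ipg_bral_atnm2 n hn lam xi hh2, ipg_bral_atnm1 n hn lam xi hh3]
    simp only [cfv_mk0 n hn lam xi hh0, cfv_mk1 n hn lam xi hh1,
      cfv_mknm2 n hn lam xi hh2, cfv_mknm1 n hn lam xi hh3,
      dfv_mk0 n hn hh0, dfv_mk1 n hn hh1, dfv_mknm2 n hn hh2, dfv_mknm1 n hn hh3]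
    simp only [ipg_add_left, ipg_sub_left, ipg_smul_left, ipg_neg_left, ipg_zero_left,
      ipg_xvec_mk0 n hn lam xi hh0, ipg_xvec_mk1 n hn lam xi hh1,
      ipg_xvec_mknm2 n hn lam xi hh2, ipg_xvec_mknm1 n hn lam xi hh3, cfv, dfv]
    split_ifs <;> first | ring1 | (exfalso; omega) | exact ‹False›.elim
  · apply key_lc n hn lam xi nab hK
    intro j
    rw [ipg_bral_xvec]
    simp only [ipg_bral_at0 n hn lam xi hh0, ipg_bral_at1 n hn lam xi hh1,
      ipg_bral_atnm2 n hn lam xi hh2, ipg_bral_atnm1 n hn lam xi hh3]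
    simp only [cfv_mk0 n hn lam xi hh0, cfv_mk1 n hn lam xi hh1,
      cfv_mknm2 n hn lam xi hh2, cfv_mknm1 n hn lam xi hh3,
      dfv_mk0 n hn hh0, dfv_mk1 n hn hh1, dfv_mknm2 n hn hh2, dfv_mknm1 n hn hh3]
    simp only [ipg_add_left, ipg_sub_left, ipg_smul_left, ipg_neg_left, ipg_zero_left,
      ipg_xvec_mk0 n hn lam xi hh0, ipg_xvec_mk1 n hn lam xi hh1,
      ipg_xvec_mknm2 n hn lam xi hh2, ipg_xvec_mknm1 n hn lam xi hh3, cfv, dfv]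
    split_ifs <;> first | ring1 | (exfalso; omega) | exact ‹False›.elim
  · apply key_lc n hn lam xi nab hK
    intro j
    rw [ipg_bral_xvec]
    simp only [ipg_bral_at0 n hn lam xi hh0, ipg_bral_at1 n hn lam xi hh1,
      ipg_bral_atnm2 n hn lam xi hh2, ipg_bral_atnm1 n hn lam xi hh3]
    simp only [cfv_mk0 n hn lam xi hh0, cfv_mk1 n hn lam xi hh1,
      cfv_mknm2 n hn lam xi hh2, cfv_mknm1 n hn lam xi hh3,
      dfv_mk0 n hn hh0, dfv_mk1 n hn hh1, dfv_mknm2 n hn hh2, dfv_mknm1 n hn hh3]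
    simp only [ipg_add_left, ipg_sub_left, ipg_smul_left, ipg_neg_left, ipg_zero_left,
      ipg_xvec_mk0 n hn lam xi hh0, ipg_xvec_mk1 n hn lam xi hh1,
      ipg_xvec_mknm2 n hn lam xi hh2, ipg_xvec_mknm1 n hn lam xi hh3, cfv, dfv]
    split_ifs <;> first | ring1 | (exfalso; omega) | exact ‹False›.elim
  · apply key_lc n hn lam xi nab hK
    intro j
    rw [ipg_bral_xvec]
    simp only [ipg_bral_at0 n hn lam xi hh0, ipg_bral_at1 n hn lam xi hh1,
      ipg_bral_atnm2 n hn lam xi hh2, ipg_bral_atnm1 n hn lam xi hh3]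
    simp only [cfv_mk0 n hn lam xi hh0, cfv_mk1 n hn lam xi hh1,
      cfv_mknm2 n hn lam xi hh2, cfv_mknm1 n hn lam xi hh3,
      dfv_mk0 n hn hh0, dfv_mk1 n hn hh1, dfv_mknm2 n hn hh2, dfv_mknm1 n hn hh3]
    simp only [ipg_add_left, ipg_sub_left, ipg_smul_left, ipg_neg_left, ipg_zero_left,
      ipg_xvec_mk0 n hn lam xi hh0, ipg_xvec_mk1 n hn lam xi hh1,
      ipg_xvec_mknm2 n hn lam xi hh2, ipg_xvec_mknm1 n hn lam xi hh3, cfv, dfv]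
    split_ifs <;> first | ring1 | (exfalso; omega) | exact ‹False›.elim
  · intro i j hij
    apply key_lc n hn lam xi nab hK
    intro k
    rw [ipg_bral_xvec, ipg_bral_xvec, ipg_bral_xvec, ipg_zero_left]
    rcases hij with ⟨ha, hb⟩ | ⟨ha, hb⟩
    · have hc : cfv n lam xi i = 0 := by
        unfold cfv
        rw [if_neg (by omega), if_neg (by omega), if_neg (by omega)]
        ring
      have hd : dfv n i = 0 := by
        unfold dfv
        rw [if_neg (by omega)]
      rw [hc, hd, if_neg (by omega : ¬((i : ℕ) = n - 1)), if_neg (by omega : ¬((i : ℕ) = 0))]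
      ring
    · have hc : cfv n lam xi j = 0 := by
        unfold cfv
        rw [if_neg (by omega), if_neg (by omega), if_neg (by omega)]
        ring
      have hd : dfv n j = 0 := by
        unfold dfv
        rw [if_neg (by omega)]
      rw [hc, hd, if_neg (by omega : ¬((j : ℕ) = n - 1)), if_neg (by omega : ¬((j : ℕ) = 0))]
      ring
end
end
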